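/- arXiv:2312.17299 — 4 statements merged into one kernel-verified Lean document; each statement's English description precedes it below -/
import Mathlib

section
/- Let R be a semiprime ring and S ∈ Den_l(R, 0) a left denominator set of R with ass_l(S) = 0. Then the left localization S⁻¹R is a semiprime ring. -/
/- Common framework: two-sided ideals, prime ideals, denominator sets and
   left localizations of (possibly noncommutative) rings, described
   axiomatically via their characteristic properties. -/

namespace BavulaMinPrimes

/-- A subset of a ring is a two-sided ideal. -/
def IsIdealSet {R : Type*} [Ring R] (I : Set R) : Prop :=
  (0 : R) ∈ I ∧ (∀ a ∈ I, ∀ b ∈ I, a + b ∈ I) ∧ (∀ a ∈ I, -a ∈ I) ∧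
    ∀ a ∈ I, ∀ r : R, r * a ∈ I ∧ a * r ∈ I

/-- A (two-sided) prime ideal: a proper ideal `P` such that `A * B ⊆ P`
implies `A ⊆ P` or `B ⊆ P` for all ideals `A`, `B`. -/
def IsPrimeIdealSet {R : Type*} [Ring R] (P : Set R) : Prop :=
  IsIdealSet P ∧ P ≠ Set.univ ∧
    ∀ A B : Set R, IsIdealSet A → IsIdealSet B →
      (∀ a ∈ A, ∀ b ∈ B, a * b ∈ P) → A ⊆ P ∨ B ⊆ P

/-- A completely prime ideal: the factor ring is a domain. -/
def IsCompletelyPrimeIdealSet {R : Type*} [Ring R] (P : Set R) : Prop :=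
  IsIdealSet P ∧ P ≠ Set.univ ∧ ∀ a b : R, a * b ∈ P → a ∈ P ∨ b ∈ P

/-- A minimal prime ideal of a ring. -/
def IsMinimalPrimeIdealSet {R : Type*} [Ring R] (P : Set R) : Prop :=
  IsPrimeIdealSet P ∧ ∀ P' : Set R, IsPrimeIdealSet P' → P' ⊆ P → P' = P

/-- A prime minimal over an ideal `A`. -/
def IsMinimalPrimeOver {R : Type*} [Ring R] (A P : Set R) : Prop :=
  IsPrimeIdealSet P ∧ A ⊆ P ∧
    ∀ P' : Set R, IsPrimeIdealSet P' → A ⊆ P' → P' ⊆ P → P' = P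

/-- The set `min(R)` of minimal primes of `R`. -/
def minPrimes (R : Type*) [Ring R] : Set (Set R) := { P | IsMinimalPrimeIdealSet P }

/-- The prime radical: intersection of all prime ideals. -/
def primeRadicalSet (R : Type*) [Ring R] : Set R :=
  { r : R | ∀ P : Set R, IsPrimeIdealSet P → r ∈ P }

/-- A ring is semiprime if its prime radical is zero. -/
def IsSemiprimeRing (R : Type*) [Ring R] : Prop := primeRadicalSet R = {0}

/-- A ring is prime if its zero ideal is a prime ideal. -/
def IsPrimeRing (R : Type*) [Ring R] : Prop := IsPrimeIdealSet ({0} : Set R)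

/-- A multiplicative subset: `1 ∈ S`, `0 ∉ S`, closed under multiplication. -/
def IsMulSet {R : Type*} [Ring R] (S : Set R) : Prop :=
  (1 : R) ∈ S ∧ (0 : R) ∉ S ∧ ∀ s ∈ S, ∀ t ∈ S, s * t ∈ S

/-- The left Ore condition: `S r ∩ R s ≠ ∅`. -/
def LeftOre {R : Type*} [Ring R] (S : Set R) : Prop :=
  ∀ r : R, ∀ s ∈ S, ∃ s' ∈ S, ∃ r' : R, s' * r = r' * s

/-- The right Ore condition: `r S ∩ s R ≠ ∅`. -/
def RightOre {R : Type*} [Ring R] (S : Set R) : Prop :=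
  ∀ r : R, ∀ s ∈ S, ∃ s' ∈ S, ∃ r' : R, r * s' = s * r'

/-- A left denominator set: a left Ore multiplicative set such that
`r s = 0` (with `s ∈ S`) implies `t r = 0` for some `t ∈ S`. -/
def IsLeftDenominatorSet {R : Type*} [Ring R] (S : Set R) : Prop :=
  IsMulSet S ∧ LeftOre S ∧ ∀ r : R, ∀ s ∈ S, r * s = 0 → ∃ t ∈ S, t * r = 0

/-- A right denominator set. -/
def IsRightDenominatorSet {R : Type*} [Ring R] (S : Set R) : Prop :=
  IsMulSet S ∧ RightOre S ∧ ∀ r : R, ∀ s ∈ S, s * r = 0 → ∃ t ∈ S, r * t = 0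

/-- `ass_l(S) = { r | s r = 0 for some s ∈ S }`. -/
def lAss {R : Type*} [Ring R] (S : Set R) : Set R := { r : R | ∃ s ∈ S, s * r = 0 }

/-- `f : R →+* Q` realizes `Q` as the left localization `S⁻¹R`:
elements of `S` become units, every element of `Q` is a left fraction
`(f s)⁻¹ (f r)`, and the kernel of `f` is `ass_l(S)`.  These properties
characterize `S⁻¹R` up to a unique `R`-isomorphism. -/
structure IsLeftLocalization {R Q : Type*} [Ring R] [Ring Q]
    (S : Set R) (f : R →+* Q) : Prop where
  isUnit : ∀ s ∈ S, IsUnit (f s)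
  surj : ∀ q : Q, ∃ s ∈ S, ∃ r : R, f s * q = f r
  ker : ∀ r : R, f r = 0 ↔ r ∈ lAss S

/-- `S⁻¹I = { s⁻¹ a | s ∈ S, a ∈ I }` as a subset of the localization `Q`:
`q ∈ S⁻¹I` iff `f s * q = f a` for some `s ∈ S`, `a ∈ I`. -/
def locSet {R Q : Type*} [Ring R] [Ring Q] (f : R →+* Q) (S : Set R)
    (I : Set R) : Set Q :=
  { q : Q | ∃ s ∈ S, ∃ a ∈ I, f s * q = f a }

/-- A normal element: `R n = n R`. -/
def IsNormalElement {R : Type*} [Ring R] (n : R) : Prop :=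
  (∀ r : R, ∃ r' : R, r * n = n * r') ∧ ∀ r : R, ∃ r' : R, n * r = r' * n

/-- A prime rich ring: every ideal contains a finite product of prime ideals
containing it (the empty product being the whole ring). -/
def IsPrimeRich (R : Type*) [Ring R] : Prop :=
  ∀ A : Set R, IsIdealSet A →
    ∃ (n : ℕ) (P : Fin n → Set R),
      (∀ i, IsPrimeIdealSet (P i) ∧ A ⊆ P i) ∧
      ∀ x : Fin n → R, (∀ i, x i ∈ P i) → (List.ofFn x).prod ∈ A

/-- An ideal which is finitely generated as a right `R`-module. -/
def IsFGRightIdeal {R : Type*} [Ring R] (I : Set R) : Prop :=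
  ∃ (m : ℕ) (g : Fin m → R), (∀ i, g i ∈ I) ∧
    ∀ x ∈ I, ∃ c : Fin m → R, x = ∑ i, g i * c i

-- Lemma A
lemma eq_zero_of_sandwich {T : Type*} [Ring T] (h : IsSemiprimeRing T)
    (x : T) (hx : ∀ r : T, x * r * x = 0) : x = 0 := by
  have hx0 : x ∈ primeRadicalSet T := by
    intro P hP
    set G : Set T := {y : T | ∃ u v : T, y = u * x * v} with hG
    set A : Set T := ((AddSubgroup.closure G : AddSubgroup T) : Set T) with hA
    have hxA : x ∈ A := AddSubgroup.subset_closure ⟨1, 1, by simp⟩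
    have hmulL : ∀ r : T, ∀ a ∈ (AddSubgroup.closure G : AddSubgroup T), r * a ∈ A := by
      intro r a ha
      induction ha using AddSubgroup.closure_induction with
      | mem y hy =>
        obtain ⟨u, v, rfl⟩ := hy
        exact AddSubgroup.subset_closure ⟨r * u, v, by noncomm_ring⟩
      | zero => rw [mul_zero]; exact (AddSubgroup.closure G).zero_mem
      | add y z _ _ hy hz => rw [mul_add]; exact (AddSubgroup.closure G).add_mem hy hz
      | neg y _ hy => rw [mul_neg]; exact (AddSubgroup.closure G).neg_mem hy
    have hmulR : ∀ r : T, ∀ a ∈ (AddSubgroup.closure G : AddSubgroup T), a * r ∈ A := by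
      intro r a ha
      induction ha using AddSubgroup.closure_induction with
      | mem y hy =>
        obtain ⟨u, v, rfl⟩ := hy
        exact AddSubgroup.subset_closure ⟨u, v * r, by noncomm_ring⟩
      | zero => rw [zero_mul]; exact (AddSubgroup.closure G).zero_mem
      | add y z _ _ hy hz => rw [add_mul]; exact (AddSubgroup.closure G).add_mem hy hz
      | neg y _ hy => rw [neg_mul]; exact (AddSubgroup.closure G).neg_mem hy
    have hAideal : IsIdealSet A :=
      ⟨(AddSubgroup.closure G).zero_mem,
       fun a ha b hb => (AddSubgroup.closure G).add_mem ha hb,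
       fun a ha => (AddSubgroup.closure G).neg_mem ha,
       fun a ha r => ⟨hmulL r a ha, hmulR r a ha⟩⟩
    have hprod : ∀ a ∈ A, ∀ b ∈ A, a * b = 0 := by
      intro a ha b hb
      induction ha using AddSubgroup.closure_induction with
      | mem y hy =>
        obtain ⟨u, v, rfl⟩ := hy
        induction hb using AddSubgroup.closure_induction with
        | mem z hz =>
          obtain ⟨u', v', rfl⟩ := hz
          have : u * x * v * (u' * x * v') = u * (x * (v * u') * x) * v' := by noncomm_ring
          rw [this, hx, mul_zero, zero_mul]
        | zero => simp
        | add z w _ _ hz hw => simp [mul_add, hz, hw]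
        | neg z _ hz => simp [mul_neg, hz]
      | zero => simp
      | add y z _ _ hy hz => simp [add_mul, hy, hz]
      | neg y _ hy => simp [neg_mul, hy]
    rcases hP.2.2 A A hAideal hAideal (fun a ha b hb => by rw [hprod a ha b hb]; exact hP.1.1) with hs | hs
    · exact hs hxA
    · exact hs hxA
  rw [h] at hx0
  simpa using hx0


lemma semiprime_of_no_sandwich {T : Type*} [Ring T]
    (h : ∀ x : T, (∀ r : T, x * r * x = 0) → x = 0) : IsSemiprimeRing T := by
  apply Set.eq_of_subset_of_subset
  · intro x hx
    by_contra hxne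
    have hxne' : x ≠ 0 := by simpa using hxne
    have hstep : ∀ y : T, y ≠ 0 → ∃ r : T, y * r * y ≠ 0 := by
      intro y hy
      by_contra hc
      push_neg at hc
      exact hy (h y hc)
    let a : ℕ → {y : T // y ≠ 0} := fun n => Nat.rec ⟨x, hxne'⟩
      (fun _ p => ⟨p.1 * Classical.choose (hstep p.1 p.2) * p.1,
        Classical.choose_spec (hstep p.1 p.2)⟩) n
    have ha : ∀ n, ∃ r : T, (a (n+1)).1 = (a n).1 * r * (a n).1 := fun n =>
      ⟨Classical.choose (hstep (a n).1 (a n).2), rfl⟩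
    set M : Set T := Set.range (fun n => (a n).1) with hM
    have htail : ∀ I : Set T, IsIdealSet I → ∀ m, (a m).1 ∈ I →
        ∀ k, m ≤ k → (a k).1 ∈ I := by
      intro I hI m hm k hk
      induction k, hk using Nat.le_induction with
      | base => exact hm
      | succ k hk ih =>
        obtain ⟨r, hr⟩ := ha k
        rw [hr]
        exact (hI.2.2.2 _ ih ((a k).1 * r)).1
    set 𝒮 : Set (Set T) := {I | IsIdealSet I ∧ I ∩ M = ∅} with h𝒮
    have h0 : ({0} : Set T) ∈ 𝒮 := by
      constructor
      · refine ⟨rfl, ?_, ?_, ?_⟩ <;> simp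
      · ext y
        simp only [Set.mem_inter_iff, Set.mem_singleton_iff, Set.mem_empty_iff_false, iff_false,
          not_and, hM, Set.mem_range]
        rintro rfl ⟨n, hn⟩
        exact (a n).2 hn
    obtain ⟨P, hP0, hPmem, hPmax⟩ := zorn_subset_nonempty 𝒮 (fun c hc hchain hne => by
      refine ⟨⋃₀ c, ⟨⟨?_, ?_, ?_, ?_⟩, ?_⟩, fun s hs => Set.subset_sUnion_of_mem hs⟩
      · obtain ⟨I, hI⟩ := hne
        exact ⟨I, hI, (hc hI).1.1⟩
      · rintro p ⟨I, hI, hpI⟩ q ⟨J, hJ, hqJ⟩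
        rcases hchain.total hI hJ with hIJ | hJI
        · exact ⟨J, hJ, (hc hJ).1.2.1 p (hIJ hpI) q hqJ⟩
        · exact ⟨I, hI, (hc hI).1.2.1 p hpI q (hJI hqJ)⟩
      · rintro p ⟨I, hI, hpI⟩
        exact ⟨I, hI, (hc hI).1.2.2.1 p hpI⟩
      · rintro p ⟨I, hI, hpI⟩ r
        exact ⟨⟨I, hI, ((hc hI).1.2.2.2 p hpI r).1⟩, ⟨I, hI, ((hc hI).1.2.2.2 p hpI r).2⟩⟩
      · ext y
        simp only [Set.mem_inter_iff, Set.mem_sUnion, Set.mem_empty_iff_false, iff_false, not_and]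
        rintro ⟨I, hI, hyI⟩ hyM
        exact absurd (Set.mem_inter hyI hyM) (by rw [(hc hI).2]; exact id)) {0} h0
    have hPideal : IsIdealSet P := hPmem.1
    have hPdisj : P ∩ M = ∅ := hPmem.2
    have hxM : x ∈ M := ⟨0, rfl⟩
    have hprime : IsPrimeIdealSet P := by
      refine ⟨hPideal, ?_, ?_⟩
      · intro huniv
        have : x ∈ P ∩ M := ⟨by rw [huniv]; trivial, hxM⟩
        rw [hPdisj] at this
        exact this
      · intro A B hA hB hAB
        by_contra hcon
        push_neg at hcon
        obtain ⟨α, hαA, hαP⟩ := Set.not_subset.mp hcon.1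
        obtain ⟨β, hβB, hβP⟩ := Set.not_subset.mp hcon.2
        -- P + A and P + B
        have hsum : ∀ C : Set T, IsIdealSet C →
            IsIdealSet {t : T | ∃ p ∈ P, ∃ c ∈ C, t = p + c} := by
          intro C hC
          refine ⟨⟨0, hPideal.1, 0, hC.1, by simp⟩, ?_, ?_, ?_⟩
          · rintro _ ⟨p, hp, c, hcC, rfl⟩ _ ⟨q, hq, d, hd, rfl⟩
            exact ⟨p + q, hPideal.2.1 p hp q hq, c + d, hC.2.1 c hcC d hd, by abel⟩
          · rintro _ ⟨p, hp, c, hcC, rfl⟩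
            exact ⟨-p, hPideal.2.2.1 p hp, -c, hC.2.2.1 c hcC, by abel⟩
          · rintro _ ⟨p, hp, c, hcC, rfl⟩ r
            constructor
            · exact ⟨r * p, (hPideal.2.2.2 p hp r).1, r * c, (hC.2.2.2 c hcC r).1, by noncomm_ring⟩
            · exact ⟨p * r, (hPideal.2.2.2 p hp r).2, c * r, (hC.2.2.2 c hcC r).2, by noncomm_ring⟩
        have hmeet : ∀ C : Set T, IsIdealSet C → ∀ γ, γ ∈ C → γ ∉ P →
            ∃ m, (a m).1 ∈ {t : T | ∃ p ∈ P, ∃ c ∈ C, t = p + c} := by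
          intro C hC γ hγC hγP
          by_contra hno
          push_neg at hno
          have hmemS : {t : T | ∃ p ∈ P, ∃ c ∈ C, t = p + c} ∈ 𝒮 := by
            refine ⟨hsum C hC, ?_⟩
            ext y
            simp only [Set.mem_inter_iff, Set.mem_empty_iff_false, iff_false, not_and, hM,
              Set.mem_range]
            rintro hy ⟨n, rfl⟩
            exact hno n hy
          have hPsub : P ⊆ {t : T | ∃ p ∈ P, ∃ c ∈ C, t = p + c} :=
            fun p hp => ⟨p, hp, 0, hC.1, by simp⟩
          have := hPmax hmemS hPsub
          exact hγP (this ⟨0, hPideal.1, γ, hγC, by simp⟩)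
        obtain ⟨m, hm⟩ := hmeet A hA α hαA hαP
        obtain ⟨n, hn⟩ := hmeet B hB β hβB hβP
        set K := max m n with hK
        have hKA : (a K).1 ∈ {t : T | ∃ p ∈ P, ∃ c ∈ A, t = p + c} :=
          htail _ (hsum A hA) m hm K (le_max_left m n)
        have hKB : (a K).1 ∈ {t : T | ∃ p ∈ P, ∃ c ∈ B, t = p + c} :=
          htail _ (hsum B hB) n hn K (le_max_right m n)
        obtain ⟨p, hp, α', hα', hEA⟩ := hKA
        obtain ⟨p', hp', β', hβ', hEB⟩ := hKB
        obtain ⟨r, hr⟩ := ha K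
        have hmemP : (a (K+1)).1 ∈ P := by
          rw [hr]
          nth_rewrite 2 [hEB]
          rw [hEA]
          have hexp : (p + α') * r * (p' + β') =
              p * r * p' + (p * r * β' + (α' * r * p' + α' * r * β')) := by noncomm_ring
          rw [hexp]
          refine hPideal.2.1 _ ((hPideal.2.2.2 _ (hPideal.2.2.2 p hp r).2 p').2) _
            (hPideal.2.1 _ ((hPideal.2.2.2 _ (hPideal.2.2.2 p hp r).2 β').2) _
              (hPideal.2.1 _ ((hPideal.2.2.2 p' hp' (α' * r)).1) _ ?_))
          exact hAB _ (hA.2.2.2 α' hα' r).2 _ hβ'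
        have : (a (K+1)).1 ∈ P ∩ M := ⟨hmemP, ⟨K + 1, rfl⟩⟩
        rw [hPdisj] at this
        exact this
    have : x ∈ P ∩ M := ⟨hx P hprime, hxM⟩
    rw [hPdisj] at this
    exact this
  · intro y hy
    intro P hP
    rw [Set.mem_singleton_iff.mp hy]
    exact hP.1.1

/-- If `R` is a semiprime ring and `S ∈ Den_l(R, 0)`, then the
left localization `S⁻¹R` is a semiprime ring. -/
theorem statement0 {R Q : Type*} [Ring R] [Ring Q]
    {S : Set R} (hS : IsLeftDenominatorSet S) (hass : lAss S = ({0} : Set R))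
    (f : R →+* Q) (hf : IsLeftLocalization S f)
    (hR : IsSemiprimeRing R) :
    IsSemiprimeRing Q := by
  apply semiprime_of_no_sandwich
  intro q hq
  obtain ⟨s, hs, a, hsa⟩ := hf.surj q
  have ha : ∀ r : R, a * r * a = 0 := by
    intro r
    have hfz : f (a * r * a) = 0 := by
      rw [map_mul, map_mul, ← hsa]
      have h1 : f s * q * f r * (f s * q) = f s * (q * f (r * s) * q) := by
        rw [map_mul]; noncomm_ring
      rw [h1, hq (f (r * s))]
      simp
    have hmem := (hf.ker _).mp hfz
    rw [hass] at hmem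
    simpa using hmem
  have ha0 : a = 0 := eq_zero_of_sandwich hR a ha
  have hz : f s * q = 0 := by rw [hsa, ha0, map_zero]
  exact ((hf.isUnit s hs).mul_right_eq_zero).mp hz

end BavulaMinPrimes
end

section
/- Let R be a semiprime ring with finitely many minimal prime ideals and S ∈ Den_l(R, 0) a left denominator set with ass_l(S) = 0. Then min(S⁻¹R) = { S⁻¹𝔭 | 𝔭 ∈ min(R) }; that is, the map min(R) → min(S⁻¹R), 𝔭 ↦ S⁻¹𝔭, is a bijection, and |min(S⁻¹R)| = |min(R)|. -/
/- Common framework: two-sided ideals, prime ideals, denominator sets and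
   left localizations of (possibly noncommutative) rings, described
   axiomatically via their characteristic properties. -/

namespace BavulaMinPrimes

/-! ### Auxiliary lemmas -/

section Aux
variable {T : Type*} [Ring T]

lemma IsIdealSet.zero_mem' {I : Set T} (h : IsIdealSet I) : (0 : T) ∈ I := h.1

lemma IsIdealSet.add_mem' {I : Set T} (h : IsIdealSet I) {a b : T} (ha : a ∈ I) (hb : b ∈ I) :
    a + b ∈ I := h.2.1 a ha b hb

lemma IsIdealSet.neg_mem' {I : Set T} (h : IsIdealSet I) {a : T} (ha : a ∈ I) : -a ∈ I :=
  h.2.2.1 a ha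

lemma IsIdealSet.mul_left' {I : Set T} (h : IsIdealSet I) {a : T} (ha : a ∈ I) (r : T) :
    r * a ∈ I := (h.2.2.2 a ha r).1

lemma IsIdealSet.mul_right' {I : Set T} (h : IsIdealSet I) {a : T} (ha : a ∈ I) (r : T) :
    a * r ∈ I := (h.2.2.2 a ha r).2

lemma IsIdealSet.one_not_mem' {I : Set T} (h : IsIdealSet I) (hne : I ≠ Set.univ) :
    (1 : T) ∉ I := by
  intro h1
  apply hne
  ext x
  simp only [Set.mem_univ, iff_true]
  simpa using h.mul_left' h1 x

lemma isIdealSet_sInter {F : Set (Set T)} (h : ∀ A ∈ F, IsIdealSet A) :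
    IsIdealSet (⋂₀ F) := by
  refine ⟨fun A hA => (h A hA).1, ?_, ?_, ?_⟩
  · intro a ha b hb A hA
    exact (h A hA).add_mem' (ha A hA) (hb A hA)
  · intro a ha A hA
    exact (h A hA).neg_mem' (ha A hA)
  · intro a ha r
    exact ⟨fun A hA => (h A hA).mul_left' (ha A hA) r,
      fun A hA => (h A hA).mul_right' (ha A hA) r⟩

/-- The two-sided ideal generated by an element. -/
def genIdeal (a : T) : Set T :=
  (AddSubgroup.closure {y : T | ∃ r r' : T, y = r * a * r'} : AddSubgroup T)

lemma self_mem_genIdeal (a : T) : a ∈ genIdeal a :=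
  AddSubgroup.subset_closure ⟨1, 1, by simp⟩

lemma genIdeal_mul_left (a r : T) {x : T} (hx : x ∈ genIdeal a) : r * x ∈ genIdeal a := by
  refine AddSubgroup.closure_induction
    (p := fun y _ => r * y ∈ (AddSubgroup.closure {y : T | ∃ u v : T, y = u * a * v} : Set T))
    ?_ ?_ ?_ ?_ hx
  · rintro y ⟨u, v, rfl⟩
    exact AddSubgroup.subset_closure ⟨r * u, v, by rw [mul_assoc, mul_assoc, mul_assoc]⟩
  · simpa using (AddSubgroup.closure {y : T | ∃ u v : T, y = u * a * v}).zero_mem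
  · intro y z _ _ hry hrz
    simpa [mul_add] using
      (AddSubgroup.closure {y : T | ∃ u v : T, y = u * a * v}).add_mem hry hrz
  · intro y _ hry
    simpa [mul_neg] using
      (AddSubgroup.closure {y : T | ∃ u v : T, y = u * a * v}).neg_mem hry

lemma genIdeal_mul_right (a r : T) {x : T} (hx : x ∈ genIdeal a) : x * r ∈ genIdeal a := by
  refine AddSubgroup.closure_induction
    (p := fun y _ => y * r ∈ (AddSubgroup.closure {y : T | ∃ u v : T, y = u * a * v} : Set T))
    ?_ ?_ ?_ ?_ hx
  · rintro y ⟨u, v, rfl⟩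
    exact AddSubgroup.subset_closure ⟨u, v * r, by rw [mul_assoc, mul_assoc]⟩
  · simpa using (AddSubgroup.closure {y : T | ∃ u v : T, y = u * a * v}).zero_mem
  · intro y z _ _ hry hrz
    simpa [add_mul] using
      (AddSubgroup.closure {y : T | ∃ u v : T, y = u * a * v}).add_mem hry hrz
  · intro y _ hry
    simpa [neg_mul] using
      (AddSubgroup.closure {y : T | ∃ u v : T, y = u * a * v}).neg_mem hry

lemma genIdeal_isIdeal (a : T) : IsIdealSet (genIdeal a) :=
  ⟨(AddSubgroup.closure _).zero_mem,
    fun x hx y hy => (AddSubgroup.closure _).add_mem hx hy,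
    fun x hx => (AddSubgroup.closure _).neg_mem hx,
    fun x hx r => ⟨genIdeal_mul_left a r hx, genIdeal_mul_right a r hx⟩⟩

lemma genIdeal_mul_mem {P : Set T} (hP : IsIdealSet P) {a b : T}
    (h : ∀ m : T, a * m * b ∈ P) {x y : T} (hx : x ∈ genIdeal a) (hy : y ∈ genIdeal b) :
    x * y ∈ P := by
  refine AddSubgroup.closure_induction
    (p := fun z _ => z * y ∈ P) ?_ (by simpa using hP.zero_mem') ?_ ?_ hx
  · rintro z ⟨u, v, rfl⟩
    refine AddSubgroup.closure_induction (p := fun w _ => u * a * v * w ∈ P)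
      ?_ (by simpa using hP.zero_mem') ?_ ?_ hy
    · rintro w ⟨u', v', rfl⟩
      have h1 : u * a * v * (u' * b * v') = u * (a * (v * u') * b) * v' := by
        simp only [mul_assoc]
      rw [h1]
      exact hP.mul_right' (hP.mul_left' (h (v * u')) u) v'
    · intro w w' _ _ h1 h2
      simpa [mul_add] using hP.add_mem' h1 h2
    · intro w _ h1
      simpa [mul_neg] using hP.neg_mem' h1
  · intro z z' _ _ h1 h2
    simpa [add_mul] using hP.add_mem' h1 h2
  · intro z _ h1
    simpa [neg_mul] using hP.neg_mem' h1

/-- The elementwise characterization of primeness, forward direction. -/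
lemma prime_mem_of_mul {P : Set T} (hP : IsPrimeIdealSet P) {a b : T}
    (h : ∀ m : T, a * m * b ∈ P) : a ∈ P ∨ b ∈ P := by
  rcases hP.2.2 (genIdeal a) (genIdeal b) (genIdeal_isIdeal a) (genIdeal_isIdeal b)
    (fun x hx y hy => genIdeal_mul_mem hP.1 h hx hy) with hA | hB
  · exact Or.inl (hA (self_mem_genIdeal a))
  · exact Or.inr (hB (self_mem_genIdeal b))

/-- The elementwise characterization of primeness, reverse direction. -/
lemma isPrime_of_elem {P : Set T} (hI : IsIdealSet P) (hne : P ≠ Set.univ)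
    (h : ∀ a b : T, (∀ m : T, a * m * b ∈ P) → a ∈ P ∨ b ∈ P) : IsPrimeIdealSet P := by
  refine ⟨hI, hne, fun A B hA hB hAB => ?_⟩
  by_cases hAP : A ⊆ P
  · exact Or.inl hAP
  · right
    obtain ⟨a0, ha0A, ha0P⟩ := Set.not_subset.mp hAP
    intro b hb
    rcases h a0 b (fun m => hAB _ (hA.mul_right' ha0A m) _ hb) with h1 | h1
    · exact absurd h1 ha0P
    · exact h1

/-- Given finitely many ideals none of which is contained in the prime `P`, there
is an element of their intersection outside `P`. -/
lemma prime_avoid {P : Set T} (hP : IsPrimeIdealSet P) {F : Set (Set T)} (hF : F.Finite) :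
    (∀ A ∈ F, IsIdealSet A) → (∀ A ∈ F, ¬ A ⊆ P) → ∃ x ∈ ⋂₀ F, x ∉ P := by
  refine Set.Finite.induction_on
    (motive := fun F _ => (∀ A ∈ F, IsIdealSet A) → (∀ A ∈ F, ¬ A ⊆ P) → ∃ x ∈ ⋂₀ F, x ∉ P)
    F hF ?_ ?_
  · intro _ _
    exact ⟨1, by simp, hP.1.one_not_mem' hP.2.1⟩
  · intro A F _ _ ih hid hnot
    obtain ⟨x, hxF, hxP⟩ := ih (fun B hB => hid B (Set.mem_insert_of_mem _ hB))
      (fun B hB => hnot B (Set.mem_insert_of_mem _ hB))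
    obtain ⟨y, hyA, hyP⟩ := Set.not_subset.mp (hnot A (Set.mem_insert _ _))
    have hAid : IsIdealSet A := hid A (Set.mem_insert _ _)
    have : ¬ ∀ m : T, x * m * y ∈ P := by
      intro hall
      rcases prime_mem_of_mul hP hall with h1 | h1
      · exact hxP h1
      · exact hyP h1
    obtain ⟨m, hm⟩ := not_forall.mp this
    refine ⟨x * m * y, ?_, hm⟩
    intro B hB
    rcases Set.mem_insert_iff.mp hB with rfl | hB'
    · exact hAid.mul_left' hyA (x * m)
    · exact ((hid B hB).mul_right' ((hid B hB).mul_right' (hxF B hB') m) y)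

/-- The intersection of a nonempty chain of prime ideals is prime. -/
lemma sInter_chain_prime {c : Set (Set T)} (hc : IsChain (· ⊆ ·) c) (hne : c.Nonempty)
    (h : ∀ P ∈ c, IsPrimeIdealSet P) : IsPrimeIdealSet (⋂₀ c) := by
  obtain ⟨P0, hP0⟩ := hne
  refine ⟨isIdealSet_sInter (fun P hP => (h P hP).1), ?_, ?_⟩
  · intro heq
    apply (h P0 hP0).2.1
    apply Set.eq_univ_of_univ_subset
    rw [← heq]
    exact Set.sInter_subset_of_mem hP0
  · intro A B hA hB hAB
    by_cases hAc : A ⊆ ⋂₀ c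
    · exact Or.inl hAc
    · right
      obtain ⟨a0, ha0A, ha0⟩ := Set.not_subset.mp hAc
      obtain ⟨P1, hP1c, ha0P1⟩ : ∃ P1 ∈ c, a0 ∉ P1 := by
        by_contra hcon
        push_neg at hcon
        exact ha0 (fun P hP => hcon P hP)
      intro b hb P hP
      rcases hc.total hP hP1c with hle | hle
      · rcases (h P hP).2.2 A B hA hB
          (fun a ha b' hb' => Set.sInter_subset_of_mem hP (hAB a ha b' hb')) with h1 | h1
        · exact absurd (hle (h1 ha0A)) ha0P1
        · exact h1 hb
      · rcases (h P1 hP1c).2.2 A B hA hB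
          (fun a ha b' hb' => Set.sInter_subset_of_mem hP1c (hAB a ha b' hb')) with h1 | h1
        · exact absurd (h1 ha0A) ha0P1
        · exact hle (h1 hb)

/-- Every prime ideal contains a minimal prime ideal (Zorn). -/
lemma exists_minimalPrime_le {P : Set T} (hP : IsPrimeIdealSet P) :
    ∃ q, IsMinimalPrimeIdealSet q ∧ q ⊆ P := by
  have hchain : ∀ c ⊆ {P' : Set T | IsPrimeIdealSet P' ∧ P' ⊆ P},
      IsChain (· ⊆ ·) c → c.Nonempty →
      ∃ lb ∈ {P' : Set T | IsPrimeIdealSet P' ∧ P' ⊆ P}, ∀ s ∈ c, lb ⊆ s := by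
    intro c hcS hchain hcne
    refine ⟨⋂₀ c, ⟨sInter_chain_prime hchain hcne (fun Q' hQ' => (hcS hQ').1),
      (Set.sInter_subset_of_mem hcne.choose_spec).trans (hcS hcne.choose_spec).2⟩,
      fun s hs => Set.sInter_subset_of_mem hs⟩
  obtain ⟨m, hmP, hm⟩ :=
    zorn_superset_nonempty {P' : Set T | IsPrimeIdealSet P' ∧ P' ⊆ P} hchain P ⟨hP, subset_rfl⟩
  refine ⟨m, ⟨hm.1.1, fun P' hP' hsub => ?_⟩, hm.1.2⟩
  exact Set.Subset.antisymm hsub (hm.2 ⟨hP', hsub.trans hm.1.2⟩ hsub)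

/-- In a semiprime ring the intersection of the minimal primes is zero. -/
lemma sInter_minPrimes_eq (hR : IsSemiprimeRing T) :
    ⋂₀ (minPrimes T) = ({0} : Set T) := by
  apply Set.Subset.antisymm
  · intro r hr
    have : r ∈ primeRadicalSet T := by
      intro P hP
      obtain ⟨q, hq, hqP⟩ := exists_minimalPrime_le hP
      exact hqP (hr q hq)
    rwa [hR] at this
  · intro r hr P hP
    rcases hr with rfl
    exact hP.1.1.zero_mem'

end Aux

section Loc

variable {R Q : Type*} [Ring R] [Ring Q] {S : Set R} {f : R →+* Q}

lemma f_eq_zero_iff (hass : lAss S = ({0} : Set R)) (hf : IsLeftLocalization S f)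
    {r : R} : f r = 0 ↔ r = 0 := by
  rw [hf.ker r, hass, Set.mem_singleton_iff]

lemma f_inj (hass : lAss S = ({0} : Set R)) (hf : IsLeftLocalization S f)
    {a b : R} (h : f a = f b) : a = b := by
  have h0 : f (a - b) = 0 := by rw [map_sub, h, sub_self]
  have := (f_eq_zero_iff hass hf).mp h0
  exact sub_eq_zero.mp this

lemma locSet_mono {A B : Set R} (h : A ⊆ B) : locSet f S A ⊆ locSet f S B := by
  rintro q ⟨s, hs, a, ha, e⟩
  exact ⟨s, hs, a, h ha, e⟩

lemma mem_locSet_self (hS : IsLeftDenominatorSet S) {A : Set R} {r : R} (hr : r ∈ A) :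
    f r ∈ locSet f S A :=
  ⟨1, hS.1.1, r, hr, by rw [map_one, one_mul]⟩

lemma locSet_f_mem_iff (hS : IsLeftDenominatorSet S) (hass : lAss S = ({0} : Set R))
    (hf : IsLeftLocalization S f) {A : Set R}
    (hsat : ∀ x t, t ∈ S → t * x ∈ A → x ∈ A) {r : R} :
    f r ∈ locSet f S A ↔ r ∈ A := by
  constructor
  · rintro ⟨s, hs, a, ha, e⟩
    rw [← map_mul] at e
    have : s * r = a := f_inj hass hf e
    exact hsat r s hs (this ▸ ha)
  · exact mem_locSet_self hS

lemma locSet_zero (hS : IsLeftDenominatorSet S) (hf : IsLeftLocalization S f) :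
    locSet f S ({0} : Set R) = ({0} : Set Q) := by
  ext q
  constructor
  · rintro ⟨s, hs, a, ha, e⟩
    rcases ha with rfl
    rw [map_zero] at e
    exact ((hf.isUnit s hs).mul_right_eq_zero).mp e
  · rintro rfl
    exact ⟨1, hS.1.1, 0, rfl, by simp⟩

lemma locSet_isIdeal (hS : IsLeftDenominatorSet S) (hf : IsLeftLocalization S f)
    {A : Set R} (hA : IsIdealSet A)
    (hsat : ∀ x t, t ∈ S → x * t ∈ A → x ∈ A) :
    IsIdealSet (locSet f S A) := by
  obtain ⟨⟨h1S, h0S, hmulS⟩, hOre, hden⟩ := hS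
  refine ⟨⟨1, h1S, 0, hA.1, by simp⟩, ?_, ?_, ?_⟩
  · rintro q1 ⟨s1, hs1, a1, ha1, e1⟩ q2 ⟨s2, hs2, a2, ha2, e2⟩
    obtain ⟨s', hs', r', he⟩ := hOre s1 s2 hs2
    refine ⟨s' * s1, hmulS _ hs' _ hs1, s' * a1 + r' * a2,
      hA.add_mem' (hA.mul_left' ha1 s') (hA.mul_left' ha2 r'), ?_⟩
    have t1 : f (s' * s1) * q1 = f (s' * a1) := by
      rw [map_mul, map_mul, mul_assoc, e1]
    have t2 : f (s' * s1) * q2 = f (r' * a2) := by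
      rw [map_mul, ← map_mul, he, map_mul, map_mul, mul_assoc, e2]
    rw [mul_add, t1, t2, map_add]
  · rintro q ⟨s, hs, a, ha, e⟩
    exact ⟨s, hs, -a, hA.neg_mem' ha, by rw [mul_neg, e, map_neg]⟩
  · rintro q ⟨s, hs, a, ha, e⟩ p
    constructor
    · obtain ⟨t, ht, r, hr⟩ := hf.surj p
      obtain ⟨u, hu, r', hu'⟩ := hOre r s hs
      refine ⟨u * t, hmulS _ hu _ ht, r' * a, hA.mul_left' ha r', ?_⟩
      calc f (u * t) * (p * q) = f u * (f t * p) * q := by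
            rw [map_mul]; simp only [mul_assoc]
        _ = f (u * r) * q := by rw [hr, ← map_mul]
        _ = f r' * (f s * q) := by rw [hu', map_mul, mul_assoc]
        _ = f (r' * a) := by rw [e, ← map_mul]
    · obtain ⟨t, ht, r, hr⟩ := hf.surj p
      obtain ⟨u, hu, a', hu'⟩ := hOre a t ht
      have ha' : a' ∈ A := hsat a' t ht (by rw [← hu']; exact hA.mul_left' ha u)
      refine ⟨u * s, hmulS _ hu _ hs, a' * r, hA.mul_right' ha' r, ?_⟩
      calc f (u * s) * (q * p) = f u * (f s * q) * p := by
            rw [map_mul]; simp only [mul_assoc]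
        _ = f (u * a) * p := by rw [e, ← map_mul]
        _ = f a' * (f t * p) := by rw [hu', map_mul, mul_assoc]
        _ = f (a' * r) := by rw [hr, ← map_mul]

lemma locSet_inter (hS : IsLeftDenominatorSet S) (hass : lAss S = ({0} : Set R))
    (hf : IsLeftLocalization S f) {A B : Set R}
    (hA : IsIdealSet A) (hB : IsIdealSet B) :
    locSet f S A ∩ locSet f S B ⊆ locSet f S (A ∩ B) := by
  rintro q ⟨⟨s, hs, a, ha, e⟩, ⟨s', hs', a', ha', e'⟩⟩
  obtain ⟨u, hu, r', he⟩ := hS.2.1 s' s hs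
  have h1 : f (u * s') * q = f (u * a') := by
    rw [map_mul, mul_assoc, e', ← map_mul]
  have h2 : f (u * s') * q = f (r' * a) := by
    rw [he, map_mul, mul_assoc, e, ← map_mul]
  have h3 : u * a' = r' * a := f_inj hass hf (h1.symm.trans h2)
  exact ⟨u * s', hS.1.2.2 _ hu _ hs', u * a',
    ⟨h3 ▸ hA.mul_left' ha r', hB.mul_left' ha' u⟩, h1⟩

lemma locSet_sInter (hS : IsLeftDenominatorSet S) (hass : lAss S = ({0} : Set R))
    (hf : IsLeftLocalization S f) {F : Set (Set R)} (hFfin : F.Finite) :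
    (∀ A ∈ F, IsIdealSet A) → ∀ q : Q, (∀ A ∈ F, q ∈ locSet f S A) →
      q ∈ locSet f S (⋂₀ F) := by
  refine Set.Finite.induction_on
    (motive := fun F _ => (∀ A ∈ F, IsIdealSet A) → ∀ q : Q, (∀ A ∈ F, q ∈ locSet f S A) →
      q ∈ locSet f S (⋂₀ F)) F hFfin ?_ ?_
  · intro _ q _
    obtain ⟨s, hs, r, hr⟩ := hf.surj q
    rw [Set.sInter_empty]
    exact ⟨s, hs, r, trivial, hr⟩
  · intro A F _ hFfin' ih hid q hq
    rw [Set.sInter_insert]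
    refine locSet_inter hS hass hf (hid A (Set.mem_insert _ _))
      (isIdealSet_sInter (fun B hB => hid B (Set.mem_insert_of_mem _ hB))) ?_
    exact ⟨hq A (Set.mem_insert _ _),
      ih (fun B hB => hid B (Set.mem_insert_of_mem _ hB)) q
        (fun B hB => hq B (Set.mem_insert_of_mem _ hB))⟩

end Loc

section MainAux

variable {R Q : Type*} [Ring R] [Ring Q] {S : Set R} {f : R →+* Q}

/-- Structure of a minimal prime of a semiprime ring with finitely many minimal primes:
it is disjoint from `S` and saturated on both sides. -/
lemma minPrime_sat (hS : IsLeftDenominatorSet S) (hass : lAss S = ({0} : Set R))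
    (hR : IsSemiprimeRing R) (hfin : (minPrimes R).Finite)
    {p : Set R} (hp : p ∈ minPrimes R) :
    (∀ s ∈ S, s ∉ p) ∧ (∀ r t : R, t ∈ S → t * r ∈ p → r ∈ p) ∧
      (∀ r t : R, t ∈ S → r * t ∈ p → r ∈ p) := by
  have hp' : IsMinimalPrimeIdealSet p := hp
  have hass' : ∀ x : R, (∃ t ∈ S, t * x = 0) → x = 0 := by
    intro x hx
    have hx' : x ∈ lAss S := hx
    rwa [hass, Set.mem_singleton_iff] at hx'
  set I : Set R := ⋂₀ {q | q ∈ minPrimes R ∧ q ≠ p} with hI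
  have hIid : IsIdealSet I :=
    isIdealSet_sInter (fun A hA => (hA.1 : IsMinimalPrimeIdealSet A).1.1)
  obtain ⟨b, hbI, hbp⟩ : ∃ b ∈ I, b ∉ p := by
    apply prime_avoid hp'.1 (hfin.subset (fun q hq => hq.1))
    · exact fun A hA => (hA.1 : IsMinimalPrimeIdealSet A).1.1
    · intro A hA hsub
      exact hA.2 (hp'.2 A (hA.1 : IsMinimalPrimeIdealSet A).1 hsub)
  have key : ∀ z : R, (∀ P ∈ minPrimes R, z ∈ P) → z = 0 := by
    intro z hz
    have hz' : z ∈ ⋂₀ (minPrimes R) := fun P hP => hz P hP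
    rwa [sInter_minPrimes_eq hR, Set.mem_singleton_iff] at hz'
  have hmem0 : ∀ r ∈ p, ∀ x ∈ I, r * x = 0 ∧ x * r = 0 := by
    intro r hr x hx
    constructor
    · apply key
      intro P hP
      by_cases hPp : P = p
      · exact hPp ▸ (hp'.1.1.mul_right' hr x)
      · exact (hP : IsMinimalPrimeIdealSet P).1.1.mul_left' (hx P ⟨hP, hPp⟩) r
    · apply key
      intro P hP
      by_cases hPp : P = p
      · exact hPp ▸ (hp'.1.1.mul_left' hr x)
      · exact (hP : IsMinimalPrimeIdealSet P).1.1.mul_right' (hx P ⟨hP, hPp⟩) r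
  have hannl : ∀ r : R, (∀ x ∈ I, r * x = 0) → r ∈ p := by
    intro r h
    have hall : ∀ m : R, r * m * b ∈ p := by
      intro m
      have h0 : r * (m * b) = 0 := h _ (hIid.mul_left' hbI m)
      rw [mul_assoc, h0]
      exact hp'.1.1.zero_mem'
    rcases prime_mem_of_mul hp'.1 hall with h' | h'
    · exact h'
    · exact absurd h' hbp
  have hannr : ∀ r : R, (∀ x ∈ I, x * r = 0) → r ∈ p := by
    intro r h
    have hall : ∀ m : R, b * m * r ∈ p := by
      intro m
      have h0 : b * m * r = 0 := h _ (hIid.mul_right' hbI m)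
      rw [h0]
      exact hp'.1.1.zero_mem'
    rcases prime_mem_of_mul hp'.1 hall with h' | h'
    · exact absurd h' hbp
    · exact h'
  refine ⟨?_, ?_, ?_⟩
  · intro s hsS hsp
    apply hbp
    have hb0 : b = 0 := hass' b ⟨s, hsS, (hmem0 s hsp b hbI).1⟩
    rw [hb0]
    exact hp'.1.1.zero_mem'
  · intro r t htS htr
    apply hannl
    intro x hx
    have h0 : t * (r * x) = 0 := by
      rw [← mul_assoc]
      exact (hmem0 _ htr x hx).1
    exact hass' _ ⟨t, htS, h0⟩
  · intro r t htS hrt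
    apply hannr
    intro x hx
    have h0 : (x * r) * t = 0 := by
      rw [mul_assoc]
      exact (hmem0 _ hrt x hx).2
    obtain ⟨u, huS, hu⟩ := hS.2.2 (x * r) t htS h0
    exact hass' _ ⟨u, huS, hu⟩

/-- The localization of a minimal prime is a prime ideal of `Q` whose contraction is `p`. -/
lemma minPrime_loc (hS : IsLeftDenominatorSet S) (hass : lAss S = ({0} : Set R))
    (hf : IsLeftLocalization S f) (hR : IsSemiprimeRing R) (hfin : (minPrimes R).Finite)
    {p : Set R} (hp : p ∈ minPrimes R) :
    IsPrimeIdealSet (locSet f S p) ∧ (∀ r : R, f r ∈ locSet f S p ↔ r ∈ p) := by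
  have hp' : IsMinimalPrimeIdealSet p := hp
  obtain ⟨hdisj, hlsat, hrsat⟩ := minPrime_sat hS hass hR hfin hp
  have hid : IsIdealSet (locSet f S p) :=
    locSet_isIdeal hS hf hp'.1.1 (fun x t ht hxt => hrsat x t ht hxt)
  have hmemf : ∀ r : R, f r ∈ locSet f S p ↔ r ∈ p :=
    fun r => locSet_f_mem_iff hS hass hf (fun x t ht htx => hlsat x t ht htx)
  have hproper : locSet f S p ≠ Set.univ := by
    intro heq
    have h1 : (1 : Q) ∈ locSet f S p := heq ▸ Set.mem_univ 1
    obtain ⟨s, hs, a, ha, e⟩ := h1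
    rw [mul_one] at e
    have hsa : s = a := f_inj hass hf e
    exact hdisj s hs (hsa ▸ ha)
  refine ⟨isPrime_of_elem hid hproper ?_, hmemf⟩
  intro α β h
  obtain ⟨s, hs, a, ha⟩ := hf.surj α
  obtain ⟨t, ht, b, hb⟩ := hf.surj β
  have hab : ∀ m : R, a * m * b ∈ p := by
    intro m
    have h1 : f s * (α * f (m * t) * β) = f (a * m * b) := by
      calc f s * (α * f (m * t) * β) = (f s * α) * f (m * t) * β := by
            simp only [mul_assoc]
        _ = f a * f m * (f t * β) := by rw [ha, map_mul]; simp only [mul_assoc]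
        _ = f a * f m * f b := by rw [hb]
        _ = f (a * m * b) := by rw [map_mul, map_mul]
    have h3 : f (a * m * b) ∈ locSet f S p := by
      rw [← h1]
      exact hid.mul_left' (h (f (m * t))) (f s)
    exact (hmemf _).mp h3
  rcases prime_mem_of_mul hp'.1 hab with h' | h'
  · exact Or.inl ⟨s, hs, a, h', ha⟩
  · exact Or.inr ⟨t, ht, b, h', hb⟩

end MainAux

/-- If `R` is a semiprime ring with finitely many minimal primes
and `S ∈ Den_l(R, 0)`, then `min(S⁻¹R) = { S⁻¹𝔭 | 𝔭 ∈ min(R) }`; the map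
`𝔭 ↦ S⁻¹𝔭` is a bijection `min(R) → min(S⁻¹R)` and `|min(S⁻¹R)| = |min(R)|`. -/
theorem statement1 {R Q : Type*} [Ring R] [Ring Q]
    {S : Set R} (hS : IsLeftDenominatorSet S) (hass : lAss S = ({0} : Set R))
    (f : R →+* Q) (hf : IsLeftLocalization S f)
    (hR : IsSemiprimeRing R) (hfin : (minPrimes R).Finite) :
    minPrimes Q = locSet f S '' minPrimes R ∧
    Set.InjOn (locSet f S) (minPrimes R) ∧
    (minPrimes Q).ncard = (minPrimes R).ncard := by
  have hloc : ∀ p ∈ minPrimes R, IsPrimeIdealSet (locSet f S p) ∧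
      (∀ r : R, f r ∈ locSet f S p ↔ r ∈ p) :=
    fun p hp => minPrime_loc hS hass hf hR hfin hp
  -- every prime of `Q` contains the localization of some minimal prime of `R`
  have hcont : ∀ J : Set Q, IsPrimeIdealSet J → ∃ p ∈ minPrimes R, locSet f S p ⊆ J := by
    intro J hJ
    by_contra hno
    push_neg at hno
    have hid : ∀ A ∈ locSet f S '' minPrimes R, IsIdealSet A := by
      rintro A ⟨p, hp, rfl⟩
      exact (hloc p hp).1.1
    have hnsub : ∀ A ∈ locSet f S '' minPrimes R, ¬ A ⊆ J := by
      rintro A ⟨p, hp, rfl⟩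
      exact hno p hp
    obtain ⟨x, hx, hxJ⟩ := prime_avoid hJ (hfin.image (locSet f S)) hid hnsub
    have hx' : x ∈ locSet f S (⋂₀ (minPrimes R)) := by
      apply locSet_sInter hS hass hf hfin
        (fun A hA => (hA : IsMinimalPrimeIdealSet A).1.1) x
      intro A hA
      exact hx _ (Set.mem_image_of_mem _ hA)
    rw [sInter_minPrimes_eq hR, locSet_zero hS hf, Set.mem_singleton_iff] at hx'
    subst hx'
    exact hxJ hJ.1.zero_mem'
  -- localizations of minimal primes are minimal primes of `Q`
  have hminQ : ∀ p ∈ minPrimes R, IsMinimalPrimeIdealSet (locSet f S p) := by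
    intro p hp
    refine ⟨(hloc p hp).1, ?_⟩
    intro J hJ hJsub
    obtain ⟨q, hq, hqJ⟩ := hcont J hJ
    have hqp : q ⊆ p := by
      intro r hr
      exact ((hloc p hp).2 r).mp (hJsub (hqJ (((hloc q hq).2 r).mpr hr)))
    have hqp' : q = p :=
      (hp : IsMinimalPrimeIdealSet p).2 q (hq : IsMinimalPrimeIdealSet q).1 hqp
    exact Set.Subset.antisymm hJsub (hqp' ▸ hqJ)
  have hEq : minPrimes Q = locSet f S '' minPrimes R := by
    apply Set.Subset.antisymm
    · intro J hJ
      have hJ' : IsMinimalPrimeIdealSet J := hJ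
      obtain ⟨p, hp, hpJ⟩ := hcont J hJ'.1
      exact ⟨p, hp, hJ'.2 _ (hloc p hp).1 hpJ⟩
    · rintro J ⟨p, hp, rfl⟩
      exact hminQ p hp
  have hInj : Set.InjOn (locSet f S) (minPrimes R) := by
    intro p hp p' hp' he
    ext r
    rw [← (hloc p hp).2 r, ← (hloc p' hp').2 r, he]
  refine ⟨hEq, hInj, ?_⟩
  rw [hEq, Set.ncard_image_of_injOn hInj]

end BavulaMinPrimes
end

section
/- Let R be a semiprime ring with finitely many minimal prime ideals and S ∈ Den_l(R, 0) a left denominator set with ass_l(S) = 0. Then for every 𝔭 ∈ min(R), the image π_𝔭(S) of S under the projection π_𝔭 : R → R/𝔭 is a left denominator set of R/𝔭 with ass_l(π_𝔭(S)) = 0, and there are ring isomorphisms π_𝔭(S)⁻¹(R/𝔭) ≅ S⁻¹R / S⁻¹𝔭 ≅ S⁻¹(R/𝔭). -/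
/- Common framework: two-sided ideals, prime ideals, denominator sets and
   left localizations of (possibly noncommutative) rings, described
   axiomatically via their characteristic properties. -/

namespace BavulaMinPrimes

/-! ### Auxiliary lemmas -/

section Aux

variable {R : Type*} [Ring R]

lemma sInter_isIdeal {C : Set (Set R)} (h : ∀ I ∈ C, IsIdealSet I) : IsIdealSet (⋂₀ C) := by
  refine ⟨fun I hI => (h I hI).1, fun a ha b hb I hI => (h I hI).2.1 a (ha I hI) b (hb I hI),
    fun a ha I hI => (h I hI).2.2.1 a (ha I hI), fun a ha r =>
    ⟨fun I hI => ((h I hI).2.2.2 a (ha I hI) r).1, fun I hI => ((h I hI).2.2.2 a (ha I hI) r).2⟩⟩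

lemma one_notMem_prime {P : Set R} (hP : IsPrimeIdealSet P) : (1:R) ∉ P := by
  intro h1
  exact hP.2.1 (Set.eq_univ_of_forall fun r => by
    simpa using (hP.1.2.2.2 1 h1 r).1)

/-- The intersection of a nonempty chain of primes is prime. -/
lemma chain_sInter_prime {C : Set (Set R)} (hC : IsChain (· ⊆ ·) C)
    (hne : C.Nonempty) (hp : ∀ P ∈ C, IsPrimeIdealSet P) : IsPrimeIdealSet (⋂₀ C) := by
  obtain ⟨P0, hP0⟩ := hne
  refine ⟨sInter_isIdeal fun I hI => (hp I hI).1, ?_, ?_⟩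
  · intro h
    have h1 : (1:R) ∈ ⋂₀ C := h ▸ Set.mem_univ 1
    exact one_notMem_prime (hp P0 hP0) (Set.mem_sInter.mp h1 P0 hP0)
  · intro A B hA hB hAB
    by_cases hAc : A ⊆ ⋂₀ C
    · exact Or.inl hAc
    · right
      obtain ⟨a, haA, haC⟩ := Set.not_subset.mp hAc
      rw [Set.mem_sInter] at haC
      push_neg at haC
      obtain ⟨Q1, hQ1C, haQ1⟩ := haC
      intro b hbB Q hQC
      rcases hC.total hQC hQ1C with hle | hle
      · rcases (hp Q hQC).2.2 A B hA hB
          (fun a ha b hb => Set.mem_sInter.mp (hAB a ha b hb) Q hQC) with h | h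
        · exact absurd (hle (h haA)) haQ1
        · exact h hbB
      · rcases (hp Q1 hQ1C).2.2 A B hA hB
          (fun a ha b hb => Set.mem_sInter.mp (hAB a ha b hb) Q1 hQ1C) with h | h
        · exact absurd (h haA) haQ1
        · exact hle (h hbB)

/-- Every prime contains a minimal prime (Zorn's lemma). -/
lemma exists_minimal_prime_le {P : Set R} (hP : IsPrimeIdealSet P) :
    ∃ q ∈ minPrimes R, q ⊆ P := by
  obtain ⟨m, hmP, hm⟩ := zorn_superset_nonempty {Q : Set R | IsPrimeIdealSet Q ∧ Q ⊆ P}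
    (fun c hcS hc hne => ⟨⋂₀ c, ⟨chain_sInter_prime hc hne (fun Q hQ => (hcS hQ).1),
      hne.elim fun Q hQ => (Set.sInter_subset_of_mem hQ).trans (hcS hQ).2⟩,
      fun s hs => Set.sInter_subset_of_mem hs⟩) P ⟨hP, subset_rfl⟩
  exact ⟨m, ⟨hm.1.1, fun Q hQ hQm => hQm.antisymm (hm.2 ⟨hQ, hQm.trans hm.1.2⟩ hQm)⟩, hm.1.2⟩

/-- If a finite intersection of primes is contained in a prime, one of them is. -/
lemma finite_sInter_subset {T : Set (Set R)} (hT : T.Finite)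
    (hTp : ∀ Q ∈ T, IsPrimeIdealSet Q) {P : Set R} (hP : IsPrimeIdealSet P)
    (h : ⋂₀ T ⊆ P) : ∃ Q ∈ T, Q ⊆ P := by
  refine Set.Finite.induction_on
    (motive := fun T _ => (∀ Q ∈ T, IsPrimeIdealSet Q) → ⋂₀ T ⊆ P → (∃ Q ∈ T, Q ⊆ P)) T hT
    (fun _ h => ?_) (fun {Q T} hQT hTfin ih hTp h => ?_) hTp h
  · simp only [Set.sInter_empty] at h
    exact absurd (h trivial) (one_notMem_prime hP)
  · rw [Set.sInter_insert] at h
    rcases hP.2.2 Q (⋂₀ T) (hTp Q (Set.mem_insert _ _)).1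
      (sInter_isIdeal fun I hI => (hTp I (Set.mem_insert_of_mem _ hI)).1)
      (fun a ha b hb => h ⟨((hTp Q (Set.mem_insert _ _)).1.2.2.2 a ha b).2,
        fun I hI => ((hTp I (Set.mem_insert_of_mem _ hI)).1.2.2.2 b (hb I hI) a).1⟩) with h1 | h1
    · exact ⟨Q, Set.mem_insert _ _, h1⟩
    · obtain ⟨Q', hQ', hQ'P⟩ := ih (fun Q hQ => hTp Q (Set.mem_insert_of_mem _ hQ)) h1
      exact ⟨Q', Set.mem_insert_of_mem _ hQ', hQ'P⟩

/-- Key lemma: if `R` is semiprime with finitely many minimal primes and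
`S ∈ Den_l(R,0)`, then `S` avoids every minimal prime `p`, and elements of `S`
can be cancelled modulo `p` on both sides. -/
lemma key_minimal_prime {S p : Set R} (hS : IsLeftDenominatorSet S)
    (hass : lAss S = ({0} : Set R)) (hR : IsSemiprimeRing R)
    (hfin : (minPrimes R).Finite) (hp : p ∈ minPrimes R) :
    (∀ s ∈ S, s ∉ p) ∧ (∀ s ∈ S, ∀ r : R, s * r ∈ p → r ∈ p) ∧
      (∀ s ∈ S, ∀ r : R, r * s ∈ p → r ∈ p) := by
  classical
  set M := minPrimes R \ {p} with hM
  set p' := ⋂₀ M with hp'def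
  have hMp : ∀ Q ∈ M, IsPrimeIdealSet Q := fun Q hQ => hQ.1.1
  have hp'ideal : IsIdealSet p' := sInter_isIdeal fun I hI => (hMp I hI).1
  have hpideal : IsIdealSet p := hp.1.1
  -- elements in `p ∩ p'` lie in every prime, hence are zero
  have hzero : ∀ z : R, z ∈ p → z ∈ p' → z = 0 := by
    intro z hzp hzp'
    have hrad : z ∈ primeRadicalSet R := by
      intro P hP
      obtain ⟨q, hq, hqP⟩ := exists_minimal_prime_le hP
      by_cases hqp : q = p
      · exact hqP (hqp ▸ hzp)
      · exact hqP (Set.mem_sInter.mp hzp' q ⟨hq, hqp⟩)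
    rw [hR] at hrad
    exact hrad
  -- p' is not contained in p
  have hap : ∃ a ∈ p', a ∉ p := by
    by_contra hcon
    push_neg at hcon
    obtain ⟨q, hqM, hqp⟩ := finite_sInter_subset (hfin.subset Set.diff_subset) hMp hp.1
      (fun a ha => hcon a ha)
    exact hqM.2 (hp.2 q hqM.1.1 hqp)
  obtain ⟨a, hap', hanp⟩ := hap
  -- S avoids p
  have hSp : ∀ s ∈ S, s ∉ p := by
    intro s hs hsp
    have h1 : s * a ∈ p := (hpideal.2.2.2 s hsp a).2
    have h2 : s * a ∈ p' := (hp'ideal.2.2.2 a hap' s).1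
    have ha : a ∈ lAss S := ⟨s, hs, hzero _ h1 h2⟩
    rw [hass] at ha
    exact hanp (ha ▸ hpideal.1)
  refine ⟨hSp, ?_, ?_⟩
  -- left cancellation
  · intro s hs r hsr
    have hann : ∀ b ∈ p', r * b = 0 := by
      intro b hb
      have h1 : s * r * b ∈ p := (hpideal.2.2.2 _ hsr b).2
      have h2 : s * r * b ∈ p' := (hp'ideal.2.2.2 b hb (s * r)).1
      have h3 : s * (r * b) = 0 := by rw [← mul_assoc]; exact hzero _ h1 h2
      have : r * b ∈ lAss S := ⟨s, hs, h3⟩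
      rw [hass] at this
      exact this
    have hAideal : IsIdealSet {x : R | ∀ b ∈ p', x * b = 0} := by
      refine ⟨fun b _ => zero_mul b, fun x hx y hy b hb => by rw [add_mul, hx b hb, hy b hb, add_zero],
        fun x hx b hb => by rw [neg_mul, hx b hb, neg_zero], fun x hx r =>
        ⟨fun b hb => by rw [mul_assoc, hx b hb, mul_zero],
         fun b hb => by rw [mul_assoc]; exact hx _ ((hp'ideal.2.2.2 b hb r).1)⟩⟩
    rcases hp.1.2.2 {x : R | ∀ b ∈ p', x * b = 0} p' hAideal hp'ideal
      (fun x hx b hb => by rw [hx b hb]; exact hpideal.1) with hsub | hsub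
    · exact hsub hann
    · exact absurd (hsub hap') hanp
  -- right cancellation
  · intro s hs r hrs
    have hann : ∀ b ∈ p', b * r = 0 := by
      intro b hb
      have h1 : b * (r * s) ∈ p := (hpideal.2.2.2 _ hrs b).1
      have h2 : b * (r * s) ∈ p' := (hp'ideal.2.2.2 b hb (r * s)).2
      have h3 : b * r * s = 0 := by rw [mul_assoc]; exact hzero _ h1 h2
      obtain ⟨t, ht, htbr⟩ := hS.2.2 _ s hs h3
      have : b * r ∈ lAss S := ⟨t, ht, htbr⟩
      rw [hass] at this
      exact this
    have hBideal : IsIdealSet {x : R | ∀ b ∈ p', b * x = 0} := by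
      refine ⟨fun b _ => mul_zero b, fun x hx y hy b hb => by rw [mul_add, hx b hb, hy b hb, add_zero],
        fun x hx b hb => by rw [mul_neg, hx b hb, neg_zero], fun x hx r =>
        ⟨fun b hb => by rw [← mul_assoc]; exact hx _ ((hp'ideal.2.2.2 b hb r).2),
         fun b hb => by rw [← mul_assoc, hx b hb, zero_mul]⟩⟩
    rcases hp.1.2.2 p' {x : R | ∀ b ∈ p', b * x = 0} hp'ideal hBideal
      (fun b hb x hx => by rw [hx b hb]; exact hpideal.1) with hsub | hsub
    · exact absurd (hsub hap') hanp
    · exact hsub hann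

/-- Universal property of the left localization: a ring homomorphism
inverting `S` factors through `S⁻¹R`. -/
lemma loc_univ {R Q Q' : Type*} [Ring R] [Ring Q] [Ring Q'] {S : Set R}
    (hS : IsLeftDenominatorSet S) (hass : lAss S = ({0} : Set R))
    (f : R →+* Q) (hf : IsLeftLocalization S f)
    (φ : R →+* Q') (hφ : ∀ s ∈ S, IsUnit (φ s)) :
    ∃ h : Q →+* Q', (∀ r : R, h (f r) = φ r) ∧
      ∀ q : Q, ∀ s ∈ S, ∀ r : R, f s * q = f r → h q = Ring.inverse (φ s) * φ r := by
  classical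
  have hfinj : ∀ r : R, f r = 0 → r = 0 := by
    intro r h
    have h2 := (hf.ker r).mp h
    rw [hass] at h2
    exact h2
  have cancel : ∀ w : Q', IsUnit w → ∀ x y : Q', w * x = w * y → x = y := by
    intro w hw x y hxy
    rw [← Ring.inverse_mul_cancel_left w x hw, hxy, Ring.inverse_mul_cancel_left w y hw]
  choose sq hsq rq hrq using hf.surj
  set val : Q → Q' := fun q => Ring.inverse (φ (sq q)) * φ (rq q) with hval
  have keyval : ∀ q : Q, ∀ s ∈ S, ∀ r : R, f s * q = f r →
      val q = Ring.inverse (φ s) * φ r := by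
    intro q s hs r hsr
    obtain ⟨u, hu, v, huv⟩ := hS.2.1 (sq q) s hs
    have h1 : f (u * rq q) = f (v * r) := by
      calc f (u * rq q) = f u * (f (sq q) * q) := by rw [map_mul, hrq q]
        _ = f (u * sq q) * q := by rw [map_mul, mul_assoc]
        _ = f (v * s) * q := by rw [huv]
        _ = f (v * r) := by rw [map_mul, mul_assoc, hsr, ← map_mul]
    have h2 : u * rq q = v * r :=
      sub_eq_zero.mp (hfinj _ (by rw [map_sub, h1, sub_self]))
    have hus : u * sq q ∈ S := hS.1.2.2 u hu _ (hsq q)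
    apply cancel _ (hφ _ hus)
    calc φ (u * sq q) * val q
        = φ u * (φ (sq q) * (Ring.inverse (φ (sq q)) * φ (rq q))) := by
          rw [hval, map_mul, mul_assoc]
      _ = φ u * φ (rq q) := by rw [Ring.mul_inverse_cancel_left _ _ (hφ _ (hsq q))]
      _ = φ (v * r) := by rw [← map_mul, h2]
      _ = φ v * (φ s * (Ring.inverse (φ s) * φ r)) := by
          rw [Ring.mul_inverse_cancel_left _ _ (hφ s hs), map_mul]
      _ = φ (u * sq q) * (Ring.inverse (φ s) * φ r) := by rw [huv, map_mul, mul_assoc]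
  have hone : (1 : R) ∈ S := hS.1.1
  refine ⟨{ toFun := val
            map_one' := ?_
            map_mul' := ?_
            map_zero' := ?_
            map_add' := ?_ }, ?_, ?_⟩
  · rw [keyval 1 1 hone 1 (by rw [map_one, mul_one]), map_one, Ring.inverse_one, one_mul]
  · intro q₁ q₂
    obtain ⟨u, hu, v, huv⟩ := hS.2.1 (rq q₁) (sq q₂) (hsq q₂)
    have ht : u * sq q₁ ∈ S := hS.1.2.2 u hu _ (hsq q₁)
    have hmul : f (u * sq q₁) * (q₁ * q₂) = f (v * rq q₂) := by
      rw [map_mul, mul_assoc, ← mul_assoc (f (sq q₁)) q₁ q₂, hrq q₁, ← mul_assoc, ← map_mul,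
        huv, map_mul, mul_assoc, hrq q₂, ← map_mul]
    show val (q₁ * q₂) = val q₁ * val q₂
    rw [keyval _ _ ht _ hmul]
    apply cancel _ (hφ _ ht)
    rw [Ring.mul_inverse_cancel_left _ _ (hφ _ ht)]
    calc φ (v * rq q₂)
        = φ (v * sq q₂) * (Ring.inverse (φ (sq q₂)) * φ (rq q₂)) := by
          rw [map_mul φ v (sq q₂), mul_assoc,
            Ring.mul_inverse_cancel_left _ _ (hφ _ (hsq q₂)), map_mul]
      _ = φ u * φ (rq q₁) * (Ring.inverse (φ (sq q₂)) * φ (rq q₂)) := by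
          rw [← map_mul, ← huv, map_mul]
      _ = φ (u * sq q₁) * (val q₁ * val q₂) := by
          show φ u * φ (rq q₁) * (Ring.inverse (φ (sq q₂)) * φ (rq q₂)) =
            φ (u * sq q₁) * ((Ring.inverse (φ (sq q₁)) * φ (rq q₁)) *
              (Ring.inverse (φ (sq q₂)) * φ (rq q₂)))
          rw [map_mul, mul_assoc (φ u) (φ (sq q₁)),
            mul_assoc (Ring.inverse (φ (sq q₁))) (φ (rq q₁)),
            Ring.mul_inverse_cancel_left _ _ (hφ _ (hsq q₁))]
          simp only [mul_assoc]
  · show val 0 = 0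
    rw [keyval 0 1 hone 0 (by rw [mul_zero, map_zero]), map_zero, mul_zero]
  · intro q₁ q₂
    obtain ⟨u, hu, v, huv⟩ := hS.2.1 (sq q₁) (sq q₂) (hsq q₂)
    have ht : u * sq q₁ ∈ S := hS.1.2.2 u hu _ (hsq q₁)
    have hsum : f (u * sq q₁) * (q₁ + q₂) = f (u * rq q₁ + v * rq q₂) := by
      rw [map_add, mul_add]
      congr 1
      · rw [map_mul, mul_assoc, hrq q₁, ← map_mul]
      · rw [huv, map_mul, mul_assoc, hrq q₂, ← map_mul]
    show val (q₁ + q₂) = val q₁ + val q₂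
    rw [keyval _ _ ht _ hsum]
    apply cancel _ (hφ _ ht)
    rw [Ring.mul_inverse_cancel_left _ _ (hφ _ ht), map_add, mul_add]
    congr 1
    · show φ (u * rq q₁) = φ (u * sq q₁) * (Ring.inverse (φ (sq q₁)) * φ (rq q₁))
      rw [map_mul, map_mul, mul_assoc, Ring.mul_inverse_cancel_left _ _ (hφ _ (hsq q₁))]
    · show φ (v * rq q₂) = φ (u * sq q₁) * (Ring.inverse (φ (sq q₂)) * φ (rq q₂))
      rw [huv, map_mul, map_mul, mul_assoc, Ring.mul_inverse_cancel_left _ _ (hφ _ (hsq q₂))]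
  · intro r
    show val (f r) = φ r
    rw [keyval (f r) 1 hone r (by rw [map_one, one_mul]), map_one, Ring.inverse_one, one_mul]
  · exact keyval

end Aux

universe u v

/-- If `R` is a semiprime ring with finitely many minimal primes
and `S ∈ Den_l(R, 0)`, then for every minimal prime `𝔭` of `R`
(whose factor ring `R/𝔭` is represented by a surjection `g : R → R'` with
kernel `𝔭`), the image `π_𝔭(S) = g '' S` is a left denominator set of `R/𝔭`
with `ass = 0`, and `π_𝔭(S)⁻¹(R/𝔭) ≅ S⁻¹R / S⁻¹𝔭 ≅ S⁻¹(R/𝔭)`, i.e. for any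
localization `Q'` of `R/𝔭` at `π_𝔭(S)` there is a surjective ring
homomorphism `S⁻¹R → Q'` with kernel `S⁻¹𝔭` commuting with the canonical
maps. -/
theorem statement2 {R Q : Type*} [Ring R] [Ring Q]
    {S : Set R} (hS : IsLeftDenominatorSet S) (hass : lAss S = ({0} : Set R))
    (f : R →+* Q) (hf : IsLeftLocalization S f)
    (hR : IsSemiprimeRing R) (hfin : (minPrimes R).Finite)
    {p : Set R} (hp : p ∈ minPrimes R)
    (R' : Type u) [Ring R'] (g : R →+* R') (hg : Function.Surjective g)
    (hker : ∀ r : R, g r = 0 ↔ r ∈ p) :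
    (IsLeftDenominatorSet (g '' S) ∧ lAss (g '' S) = ({0} : Set R')) ∧
    ∀ (Q' : Type v) [Ring Q'],
      ∀ f' : R' →+* Q', IsLeftLocalization (g '' S) f' →
        ∃ h : Q →+* Q', Function.Surjective h ∧
          (∀ q : Q, h q = 0 ↔ q ∈ locSet f S p) ∧
          ∀ r : R, h (f r) = f' (g r) := by
  classical
  obtain ⟨hSp, hB, hC⟩ := key_minimal_prime hS hass hR hfin hp
  have hone : (1:R) ∈ S := hS.1.1
  have hg1 : (1:R') ∈ g '' S := ⟨1, hone, map_one g⟩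
  have hgSden : IsLeftDenominatorSet (g '' S) := by
    refine ⟨⟨hg1, ?_, ?_⟩, ?_, ?_⟩
    · rintro ⟨s, hs, hgs⟩
      exact hSp s hs ((hker s).mp hgs)
    · rintro _ ⟨s, hs, rfl⟩ _ ⟨t, ht, rfl⟩
      exact ⟨s * t, hS.1.2.2 s hs t ht, map_mul g s t⟩
    · rintro r' _ ⟨s, hs, rfl⟩
      obtain ⟨r, rfl⟩ := hg r'
      obtain ⟨s₁, hs₁, r₁, h⟩ := hS.2.1 r s hs
      exact ⟨g s₁, ⟨s₁, hs₁, rfl⟩, g r₁, by rw [← map_mul, ← map_mul, h]⟩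
    · rintro r' _ ⟨s, hs, rfl⟩ h0
      obtain ⟨r, rfl⟩ := hg r'
      rw [← map_mul] at h0
      have hrp : r ∈ p := hC s hs r ((hker _).mp h0)
      exact ⟨1, hg1, by rw [one_mul]; exact (hker r).mpr hrp⟩
  have hgSass : lAss (g '' S) = ({0} : Set R') := by
    ext r'
    simp only [Set.mem_singleton_iff]
    constructor
    · rintro ⟨_, ⟨s, hs, rfl⟩, h0⟩
      obtain ⟨r, rfl⟩ := hg r'
      rw [← map_mul] at h0
      exact (hker r).mpr (hB s hs r ((hker _).mp h0))
    · rintro rfl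
      exact ⟨1, hg1, mul_zero 1⟩
  refine ⟨⟨hgSden, hgSass⟩, ?_⟩
  intro Q' _ f' hf'
  have hφ : ∀ s ∈ S, IsUnit ((f'.comp g) s) := fun s hs => hf'.isUnit (g s) ⟨s, hs, rfl⟩
  obtain ⟨h, hcomm, hkeyq⟩ := loc_univ hS hass f hf (f'.comp g) hφ
  have hf'inj : ∀ r' : R', f' r' = 0 → r' = 0 := by
    intro r' h0
    have h1 := (hf'.ker r').mp h0
    rw [hgSass] at h1
    exact h1
  refine ⟨h, ?_, ?_, fun r => hcomm r⟩
  · -- surjectivity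
    intro q'
    obtain ⟨_, ⟨s, hs, rfl⟩, r', hq'⟩ := hf'.surj q'
    obtain ⟨r, rfl⟩ := hg r'
    have hsu : IsUnit (f s) := hf.isUnit s hs
    refine ⟨Ring.inverse (f s) * f r, ?_⟩
    have hfs : f s * (Ring.inverse (f s) * f r) = f r := Ring.mul_inverse_cancel_left _ _ hsu
    rw [hkeyq _ s hs r hfs]
    calc Ring.inverse ((f'.comp g) s) * (f'.comp g) r
        = Ring.inverse (f' (g s)) * (f' (g s) * q') := by
          rw [RingHom.comp_apply, RingHom.comp_apply, hq']
      _ = q' := Ring.inverse_mul_cancel_left _ _ (hf'.isUnit _ ⟨s, hs, rfl⟩)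
  · -- kernel
    intro q
    constructor
    · intro h0
      obtain ⟨s, hs, r, hsr⟩ := hf.surj q
      have hq := hkeyq q s hs r hsr
      have h1 : (f'.comp g) r = 0 := by
        rw [← Ring.mul_inverse_cancel_left ((f'.comp g) s) ((f'.comp g) r) (hφ s hs),
          ← hq, h0, mul_zero]
      have h2 : g r = 0 := hf'inj _ h1
      exact ⟨s, hs, r, (hker r).mp h2, hsr⟩
    · rintro ⟨s, hs, a, hap, hsa⟩
      rw [hkeyq q s hs a hsa]
      have ha0 : (f'.comp g) a = 0 := by
        rw [RingHom.comp_apply, (hker a).mpr hap, map_zero]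
      rw [ha0, mul_zero]


end BavulaMinPrimes
end

section
/- Let R be a semiprime ring with finitely many minimal primes and S ∈ Den(R, 𝔞) a left and right denominator set. Suppose that for all 𝔭 ∈ min(R, S), 𝔭 is a completely prime ideal of R and the left ideal S⁻¹𝔭 is a two-sided ideal of S⁻¹R. Then: (1) the ring S⁻¹R is a semiprime ring with min(S⁻¹R) = { S⁻¹𝔭 | 𝔭 ∈ min(R,S) }, and every ideal in min(S⁻¹R) is completely prime; (2) all ideals in the set { S⁻¹𝔭 | 𝔭 ∈ min(R,S) } are distinct, i.e. |min(S⁻¹R)| = |min(R,S)|. -/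
/- Common framework: two-sided ideals, prime ideals, denominator sets and
   left localizations of (possibly noncommutative) rings, described
   axiomatically via their characteristic properties. -/

namespace BavulaMinPrimes

/-! ### Auxiliary lemmas -/

section Aux

variable {R : Type*} [Ring R]

namespace IsIdealSet

variable {I : Set R}

lemma zero_mem (h : IsIdealSet I) : (0:R) ∈ I := h.1
lemma add_mem (h : IsIdealSet I) {a b : R} (ha : a ∈ I) (hb : b ∈ I) : a + b ∈ I :=
  h.2.1 a ha b hb
lemma neg_mem (h : IsIdealSet I) {a : R} (ha : a ∈ I) : -a ∈ I := h.2.2.1 a ha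
lemma mul_mem_left (h : IsIdealSet I) (r : R) {a : R} (ha : a ∈ I) : r * a ∈ I :=
  (h.2.2.2 a ha r).1
lemma mul_mem_right (h : IsIdealSet I) (r : R) {a : R} (ha : a ∈ I) : a * r ∈ I :=
  (h.2.2.2 a ha r).2
lemma sub_mem (h : IsIdealSet I) {a b : R} (ha : a ∈ I) (hb : b ∈ I) : a - b ∈ I := by
  rw [sub_eq_add_neg]; exact h.add_mem ha (h.neg_mem hb)

lemma eq_univ_of_one_mem (h : IsIdealSet I) (h1 : (1:R) ∈ I) : I = Set.univ := by
  ext x; simp only [Set.mem_univ, iff_true]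
  simpa using h.mul_mem_left x h1

lemma one_not_mem (h : IsIdealSet I) (hne : I ≠ Set.univ) : (1:R) ∉ I :=
  fun h1 => hne (h.eq_univ_of_one_mem h1)

lemma list_sum_mem (h : IsIdealSet I) : ∀ (l : List R), (∀ x ∈ l, x ∈ I) → l.sum ∈ I
  | [], _ => by simpa using h.zero_mem
  | a :: t, hl => by
      rw [List.sum_cons]
      exact h.add_mem (hl a (by simp)) (h.list_sum_mem t fun x hx => hl x (by simp [hx]))

lemma list_prod_mem_of_mem (h : IsIdealSet I) : ∀ (l : List R), ∀ x ∈ l, x ∈ I → l.prod ∈ I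
  | a :: t, x, hx, hxI => by
      rw [List.prod_cons]
      rcases List.mem_cons.1 hx with rfl | hxt
      · exact h.mul_mem_right _ hxI
      · exact h.mul_mem_left _ (h.list_prod_mem_of_mem t x hxt hxI)

end IsIdealSet

lemma sInter_ideal {C : Set (Set R)} (h : ∀ P ∈ C, IsIdealSet P) :
    IsIdealSet (⋂₀ C) := by
  refine ⟨?_, ?_, ?_, ?_⟩
  · exact fun P hP => (h P hP).zero_mem
  · exact fun a ha b hb P hP => (h P hP).add_mem (ha P hP) (hb P hP)
  · exact fun a ha P hP => (h P hP).neg_mem (ha P hP)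
  · exact fun a ha r => ⟨fun P hP => (h P hP).mul_mem_left r (ha P hP),
      fun P hP => (h P hP).mul_mem_right r (ha P hP)⟩

lemma list_map_sum_mul_left (l : List (R × R)) (g : R × R → R) (r : R) :
    r * (l.map g).sum = (l.map fun x => r * g x).sum := by
  induction l with
  | nil => simp
  | cons p t ih => simp [mul_add, ih]

lemma list_map_sum_mul_right (l : List (R × R)) (g : R × R → R) (r : R) :
    (l.map g).sum * r = (l.map fun x => g x * r).sum := by
  induction l with
  | nil => simp
  | cons p t ih => simp [add_mul, ih]

lemma list_map_sum_neg (l : List (R × R)) (g : R × R → R) :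
    -(l.map g).sum = (l.map fun x => -(g x)).sum := by
  induction l with
  | nil => simp
  | cons p t ih => rw [List.map_cons, List.map_cons, List.sum_cons, List.sum_cons, neg_add, ih]

/-- The two-sided ideal generated by an element. -/
def idealGen (a : R) : Set R :=
  { x | ∃ l : List (R × R), x = (l.map fun p => p.1 * a * p.2).sum }

lemma self_mem_idealGen (a : R) : a ∈ idealGen a :=
  ⟨[(1, 1)], by simp⟩

lemma idealGen_isIdeal (a : R) : IsIdealSet (idealGen a) := by
  refine ⟨⟨[], by simp⟩, ?_, ?_, ?_⟩
  · rintro x ⟨l, rfl⟩ y ⟨m, rfl⟩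
    exact ⟨l ++ m, by simp⟩
  · rintro x ⟨l, rfl⟩
    refine ⟨l.map (fun p => (-p.1, p.2)), ?_⟩
    rw [list_map_sum_neg, List.map_map]
    congr 1
    apply List.map_congr_left
    intro p _
    simp
  · rintro x ⟨l, rfl⟩ r
    constructor
    · refine ⟨l.map (fun p => (r * p.1, p.2)), ?_⟩
      rw [list_map_sum_mul_left, List.map_map]
      congr 1
      apply List.map_congr_left
      intro p _
      simp [mul_assoc]
    · refine ⟨l.map (fun p => (p.1, p.2 * r)), ?_⟩
      rw [list_map_sum_mul_right, List.map_map]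
      congr 1
      apply List.map_congr_left
      intro p _
      simp [mul_assoc]

lemma term_mul_idealGen_mem {P : Set R} (hP : IsIdealSet P) {a b : R}
    (h : ∀ r : R, a * r * b ∈ P) (u v : R) :
    ∀ y ∈ idealGen b, (u * a * v) * y ∈ P := by
  rintro y ⟨m, rfl⟩
  induction m with
  | nil => simpa using hP.zero_mem
  | cons q s ihm =>
      rw [List.map_cons, List.sum_cons, mul_add]
      refine hP.add_mem ?_ ihm
      have e : u * a * v * (q.1 * b * q.2) = u * (a * (v * q.1) * b) * q.2 := by
        simp [mul_assoc]
      rw [e]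
      exact hP.mul_mem_right _ (hP.mul_mem_left _ (h _))

lemma idealGen_mul_mem {P : Set R} (hP : IsIdealSet P) {a b : R}
    (h : ∀ r : R, a * r * b ∈ P) :
    ∀ x ∈ idealGen a, ∀ y ∈ idealGen b, x * y ∈ P := by
  rintro x ⟨l, rfl⟩ y hy
  induction l with
  | nil => simpa using hP.zero_mem
  | cons p t ih =>
      rw [List.map_cons, List.sum_cons, add_mul]
      exact hP.add_mem (term_mul_idealGen_mem hP h p.1 p.2 y hy) ih

/-- Element-wise characterization of primeness. -/
lemma isPrime_iff_elementwise {P : Set R} :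
    IsPrimeIdealSet P ↔ IsIdealSet P ∧ P ≠ Set.univ ∧
      ∀ a b : R, (∀ r : R, a * r * b ∈ P) → a ∈ P ∨ b ∈ P := by
  constructor
  · rintro ⟨hI, hne, hpr⟩
    refine ⟨hI, hne, fun a b h => ?_⟩
    rcases hpr (idealGen a) (idealGen b) (idealGen_isIdeal a) (idealGen_isIdeal b)
      (idealGen_mul_mem hI h) with hA | hB
    · exact Or.inl (hA (self_mem_idealGen a))
    · exact Or.inr (hB (self_mem_idealGen b))
  · rintro ⟨hI, hne, hew⟩
    refine ⟨hI, hne, fun A B hA hB hAB => ?_⟩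
    by_cases hAP : A ⊆ P
    · exact Or.inl hAP
    · rw [Set.not_subset] at hAP
      obtain ⟨a, haA, haP⟩ := hAP
      refine Or.inr fun b hbB => ?_
      have key : ∀ r : R, a * r * b ∈ P := by
        intro r
        rw [mul_assoc]
        exact hAB a haA (r * b) (hB.mul_mem_left r hbB)
      rcases hew a b key with h | h
      · exact absurd h haP
      · exact h

lemma IsCompletelyPrimeIdealSet.isPrime {P : Set R} (h : IsCompletelyPrimeIdealSet P) :
    IsPrimeIdealSet P :=
  isPrime_iff_elementwise.2 ⟨h.1, h.2.1, fun a b hab => by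
    rcases h.2.2 a (1 * b) (by simpa using hab 1) with ha | hb
    · exact Or.inl ha
    · exact Or.inr (by simpa using hb)⟩

/-- The intersection of a nonempty chain of primes is prime. -/
lemma sInter_chain_isPrime {C : Set (Set R)} (hC : C.Nonempty)
    (hchain : IsChain (· ⊆ ·) C) (h : ∀ P ∈ C, IsPrimeIdealSet P) :
    IsPrimeIdealSet (⋂₀ C) := by
  obtain ⟨P0, hP0⟩ := hC
  refine isPrime_iff_elementwise.2 ⟨sInter_ideal (fun P hP => (h P hP).1), ?_, ?_⟩
  · intro heq
    have h1 : (1:R) ∈ ⋂₀ C := heq ▸ Set.mem_univ 1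
    exact (h P0 hP0).1.one_not_mem (h P0 hP0).2.1 (h1 P0 hP0)
  · intro a b hab
    by_cases haC : a ∈ ⋂₀ C
    · exact Or.inl haC
    · simp only [Set.mem_sInter, not_forall] at haC
      obtain ⟨Pi, hPi, haPi⟩ := haC
      refine Or.inr fun Pk hPk => ?_
      have hk := isPrime_iff_elementwise.1 (h Pk hPk)
      rcases hk.2.2 a b (fun r => hab r Pk hPk) with ha | hb
      · have hik : Pi ⊆ Pk := by
          rcases hchain.total hPi hPk with hle | hle
          · exact hle
          · exact absurd (hle ha) haPi
        have hi := isPrime_iff_elementwise.1 (h Pi hPi)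
        rcases hi.2.2 a b (fun r => hab r Pi hPi) with ha' | hb'
        · exact absurd ha' haPi
        · exact hik hb'
      · exact hb

/-- Every prime ideal contains a minimal prime ideal. -/
lemma exists_minimalPrime_subset {P : Set R} (hP : IsPrimeIdealSet P) :
    ∃ p : Set R, IsMinimalPrimeIdealSet p ∧ p ⊆ P := by
  obtain ⟨m, hmx, hmin⟩ :=
    zorn_superset_nonempty {P : Set R | IsPrimeIdealSet P}
      (fun c hc hchain hne =>
        ⟨⋂₀ c, sInter_chain_isPrime hne hchain (fun P hP => hc hP),
          fun s hs => Set.sInter_subset_of_mem hs⟩) P hP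
  exact ⟨m, ⟨hmin.prop, fun P' hP' hsub => le_antisymm hsub (hmin.2 hP' hsub)⟩, hmx⟩

/-- Product set of a list of sets. -/
def prodSet : List (Set R) → Set R
  | [] => {1}
  | A :: t => {x | ∃ a ∈ A, ∃ y ∈ prodSet t, x = a * y}

lemma prodSet_mem_of_mem : ∀ (l : List (Set R)), (∀ A ∈ l, IsIdealSet A) →
    ∀ x ∈ prodSet l, ∀ A ∈ l, x ∈ A
  | [], _, x, _, A, hA => by simp at hA
  | B :: t, hl, x, hx, A, hA => by
      obtain ⟨a, haB, y, hy, rfl⟩ := hx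
      rcases List.mem_cons.1 hA with rfl | hAt
      · exact (hl A (by simp)).mul_mem_right _ haB
      · exact (hl A (List.mem_cons_of_mem _ hAt)).mul_mem_left _
          (prodSet_mem_of_mem t (fun A' hA' => hl A' (List.mem_cons_of_mem _ hA')) y hy A hAt)

lemma prime_of_prodSet_subset {P : Set R} (hP : IsPrimeIdealSet P) :
    ∀ (l : List (Set R)), l ≠ [] → (∀ A ∈ l, IsIdealSet A) →
      prodSet l ⊆ P → ∃ A ∈ l, A ⊆ P
  | [], hne, _, _ => absurd rfl hne
  | A :: t, _, hid, hsub => by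
      by_cases hAP : A ⊆ P
      · exact ⟨A, by simp, hAP⟩
      rw [Set.not_subset] at hAP
      obtain ⟨a, haA, haP⟩ := hAP
      have hidt : ∀ B ∈ t, IsIdealSet B := fun B hB => hid B (List.mem_cons_of_mem _ hB)
      rcases List.eq_nil_or_concat t with rfl | ht
      · exact absurd (hsub ⟨a, haA, 1, rfl, (mul_one a).symm⟩) haP
      · have htsub : prodSet t ⊆ P := by
          intro y hy
          have key : ∀ r : R, a * r * y ∈ P := fun r =>
            hsub ⟨a * r, (hid A (by simp)).mul_mem_right r haA, y, hy, by rw [mul_assoc]⟩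
          rcases (isPrime_iff_elementwise.1 hP).2.2 a y key with h | h
          · exact absurd h haP
          · exact h
        have htne : t ≠ [] := by
          obtain ⟨l', b, rfl⟩ := ht
          simp
        obtain ⟨B, hBt, hBP⟩ := prime_of_prodSet_subset hP t htne hidt htsub
        exact ⟨B, List.mem_cons_of_mem _ hBt, hBP⟩

lemma list_prod_mem_mulset {S : Set R} (hS : IsMulSet S) :
    ∀ l : List R, (∀ x ∈ l, x ∈ S) → l.prod ∈ S
  | [], _ => by simpa using hS.1
  | a :: t, h => by
      rw [List.prod_cons]
      exact hS.2.2 a (h a (by simp)) t.prod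
        (list_prod_mem_mulset hS t (fun x hx => h x (by simp [hx])))

/-- Any element lying in every member of `min(R,S)` is annihilated by `S`. -/
lemma interMin_lAss (hR : IsSemiprimeRing R)
    (hfin : (minPrimes R).Finite) {S : Set R} (hS : IsMulSet S)
    (hreg : ∀ r : R, ∀ s ∈ S, r * s = 0 → ∃ t ∈ S, t * r = 0)
    (b : R) (hb : ∀ p : Set R, IsMinimalPrimeIdealSet p → p ∩ S = ∅ → b ∈ p) :
    b ∈ lAss S := by
  classical
  set g : Set R → R := fun p => if h : (p ∩ S).Nonempty then h.some else 1 with hg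
  have hgS : ∀ p, g p ∈ S := by
    intro p; rw [hg]; dsimp only
    split_ifs with h
    · exact h.some_mem.2
    · exact hS.1
  have hgp : ∀ p, (p ∩ S).Nonempty → g p ∈ p := by
    intro p h; rw [hg]; dsimp only; rw [dif_pos h]; exact h.some_mem.1
  set l := hfin.toFinset.toList.map g with hl
  have hsS : l.prod ∈ S := by
    refine list_prod_mem_mulset hS l ?_
    intro x hx
    rw [hl] at hx
    obtain ⟨p, _, rfl⟩ := List.mem_map.1 hx
    exact hgS p
  have hrad : b * l.prod ∈ primeRadicalSet R := by
    intro P hP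
    obtain ⟨p, hpmin, hpP⟩ := exists_minimalPrime_subset hP
    refine hpP ?_
    by_cases hcap : (p ∩ S).Nonempty
    · have hmem : g p ∈ l := by
        rw [hl]
        refine List.mem_map.2 ⟨p, ?_, rfl⟩
        rw [Finset.mem_toList, Set.Finite.mem_toFinset]
        exact hpmin
      exact hpmin.1.1.mul_mem_left b (hpmin.1.1.list_prod_mem_of_mem l (g p) hmem (hgp p hcap))
    · rw [Set.not_nonempty_iff_eq_empty] at hcap
      exact hpmin.1.1.mul_mem_right _ (hb p hpmin hcap)
  have hb0 : b * l.prod = 0 := by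
    rw [IsSemiprimeRing] at hR
    have := hR ▸ hrad
    simpa using this
  obtain ⟨t, ht, h0⟩ := hreg b l.prod hsS hb0
  exact ⟨t, ht, h0⟩

end Aux

section Loc

variable {R Q : Type*} [Ring R] [Ring Q] {S : Set R}

/-- Common denominator for a finite family of fraction presentations. -/
lemma common_denom (f : R →+* Q) (hf : IsLeftLocalization S f)
    (hore : LeftOre S) (hS : IsMulSet S) {T : Set (Set R)} (hT : T.Finite)
    (q : Q) :
    ∀ (_ : ∀ p ∈ T, lAss S ⊆ p) (_ : ∀ p ∈ T, IsIdealSet p)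
      (_ : ∀ p ∈ T, q ∈ locSet f S p),
    ∃ t ∈ S, ∃ b : R, f t * q = f b ∧ ∀ p ∈ T, b ∈ p := by
  refine Set.Finite.induction_on T hT ?_ ?_
  · intro _ _ _
    obtain ⟨s, hs, r, hr⟩ := hf.surj q
    exact ⟨s, hs, r, hr, fun p hp => absurd hp (Set.notMem_empty p)⟩
  · intro p T hpT hTfin IH hassI hidI hqI
    obtain ⟨t, ht, b, htq, hbT⟩ := IH
      (fun p' h => hassI p' (Set.mem_insert_of_mem _ h))
      (fun p' h => hidI p' (Set.mem_insert_of_mem _ h))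
      (fun p' h => hqI p' (Set.mem_insert_of_mem _ h))
    obtain ⟨sp, hsp, ap, hap, hspq⟩ := hqI p (Set.mem_insert p T)
    obtain ⟨u, hu, r', hur⟩ := hore t sp hsp
    refine ⟨u * t, hS.2.2 u hu t ht, u * b, ?_, ?_⟩
    · rw [map_mul, mul_assoc, htq, ← map_mul]
    · have hub : f (u * b) = f (r' * ap) := by
        rw [map_mul, ← htq, ← mul_assoc, ← map_mul, hur, map_mul, mul_assoc, hspq, ← map_mul]
      have hdiff : u * b - r' * ap ∈ lAss S :=
        (hf.ker _).1 (by rw [map_sub, hub, sub_self])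
      intro p' hp'
      rcases Set.mem_insert_iff.1 hp' with rfl | hp'T
      · have h1 : u * b - r' * ap ∈ p' := hassI p' (Set.mem_insert _ _) hdiff
        have h2 : r' * ap ∈ p' := (hidI p' (Set.mem_insert _ _)).mul_mem_left r' hap
        have := (hidI p' (Set.mem_insert _ _)).add_mem h1 h2
        simpa using this
      · exact (hidI p' (Set.mem_insert_of_mem _ hp'T)).mul_mem_left u (hbT p' hp'T)

/-- The localization of a completely prime `p ∈ min(R,S)` is completely prime. -/
lemma locSet_completelyPrime (f : R →+* Q) (hf : IsLeftLocalization S f)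
    (hore : LeftOre S) {p : Set R}
    (hp : IsCompletelyPrimeIdealSet p) (hdisj : p ∩ S = ∅)
    (hassp : lAss S ⊆ p) (hideal : IsIdealSet (locSet f S p)) :
    IsCompletelyPrimeIdealSet (locSet f S p) := by
  have hnotmem : ∀ s ∈ S, s ∉ p := fun s hs hsp =>
    (Set.eq_empty_iff_forall_notMem.1 hdisj s) ⟨hsp, hs⟩
  refine ⟨hideal, ?_, ?_⟩
  · intro heq
    have h1 : (1:Q) ∈ locSet f S p := heq ▸ Set.mem_univ 1
    obtain ⟨s, hs, a, ha, hsa⟩ := h1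
    rw [mul_one] at hsa
    have hd : s - a ∈ lAss S := (hf.ker _).1 (by rw [map_sub, hsa, sub_self])
    have hsp : s ∈ p := by
      have := hp.1.add_mem (hassp hd) ha
      simpa using this
    exact hnotmem s hs hsp
  · intro q1 q2 hq
    obtain ⟨s, hs, a, ha, hsa⟩ := hq
    obtain ⟨s1, hs1, r1, hr1⟩ := hf.surj q1
    obtain ⟨s2, hs2, r2, hr2⟩ := hf.surj q2
    obtain ⟨s3, hs3, r3, h3⟩ := hore r1 s2 hs2
    have e1 : f (s3 * s1) * (q1 * q2) = f (r3 * r2) := by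
      calc f (s3 * s1) * (q1 * q2) = f s3 * ((f s1 * q1) * q2) := by
            rw [map_mul, mul_assoc, mul_assoc]
        _ = f (s3 * r1) * q2 := by rw [hr1, map_mul, mul_assoc]
        _ = f r3 * (f s2 * q2) := by rw [h3, map_mul, mul_assoc]
        _ = f (r3 * r2) := by rw [hr2, map_mul]
    obtain ⟨t, ht, u, hu⟩ := hore (s3 * s1) s hs
    have e2 : f (t * (r3 * r2)) = f (u * a) := by
      calc f (t * (r3 * r2)) = f t * (f (s3 * s1) * (q1 * q2)) := by rw [map_mul, e1]
        _ = f (t * (s3 * s1)) * (q1 * q2) := by simp [map_mul, mul_assoc]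
        _ = f u * (f s * (q1 * q2)) := by rw [hu, map_mul, mul_assoc]
        _ = f (u * a) := by rw [hsa, map_mul]
    have hdiff : t * (r3 * r2) - u * a ∈ lAss S :=
      (hf.ker _).1 (by rw [map_sub, e2, sub_self])
    have htrr : t * (r3 * r2) ∈ p := by
      have := hp.1.add_mem (hassp hdiff) (hp.1.mul_mem_left u ha)
      simpa using this
    have hrr : r3 * r2 ∈ p := by
      rcases hp.2.2 t (r3 * r2) htrr with h | h
      · exact absurd h (hnotmem t ht)
      · exact h
    rcases hp.2.2 r3 r2 hrr with h | h
    · -- r3 ∈ p, so s3 * r1 = r3 * s2 ∈ p, so r1 ∈ p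
      have : s3 * r1 ∈ p := by rw [h3]; exact hp.1.mul_mem_right s2 h
      rcases hp.2.2 s3 r1 this with h' | h'
      · exact absurd h' (hnotmem s3 hs3)
      · exact Or.inl ⟨s1, hs1, r1, h', hr1⟩
    · exact Or.inr ⟨s2, hs2, r2, h, hr2⟩

end Loc

/-- Let `R` be semiprime with finitely many minimal primes and
`S ∈ Den(R, 𝔞)`.  If every `𝔭 ∈ min(R,S)` is completely prime and `S⁻¹𝔭` is
a two-sided ideal of `S⁻¹R`, then `S⁻¹R` is semiprime with
`min(S⁻¹R) = { S⁻¹𝔭 | 𝔭 ∈ min(R,S) }`, every minimal prime of `S⁻¹R` is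
completely prime, and all the ideals `S⁻¹𝔭` are distinct, i.e.
`|min(S⁻¹R)| = |min(R,S)|`. -/
theorem statement6 {R Q : Type*} [Ring R] [Ring Q]
    (hR : IsSemiprimeRing R) (hfin : (minPrimes R).Finite)
    {S : Set R} (hSl : IsLeftDenominatorSet S) (hSr : IsRightDenominatorSet S)
    {A : Set R} (hass : lAss S = A)
    (f : R →+* Q) (hf : IsLeftLocalization S f)
    (hcp : ∀ p ∈ {p : Set R | IsMinimalPrimeIdealSet p ∧ p ∩ S = ∅},
      IsCompletelyPrimeIdealSet p ∧ IsIdealSet (locSet f S p)) :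
    IsSemiprimeRing Q ∧
    minPrimes Q = locSet f S '' {p : Set R | IsMinimalPrimeIdealSet p ∧ p ∩ S = ∅} ∧
    (∀ P ∈ minPrimes Q, IsCompletelyPrimeIdealSet P) ∧
    Set.InjOn (locSet f S) {p : Set R | IsMinimalPrimeIdealSet p ∧ p ∩ S = ∅} ∧
    (minPrimes Q).ncard = {p : Set R | IsMinimalPrimeIdealSet p ∧ p ∩ S = ∅}.ncard := by
  classical
  obtain ⟨hMul, horeL, hregL⟩ := hSl
  set M := {p : Set R | IsMinimalPrimeIdealSet p ∧ p ∩ S = ∅} with hM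
  have hMfin : M.Finite := hfin.subset (fun p hp => hp.1)
  have hcpP : ∀ p ∈ M, IsCompletelyPrimeIdealSet p := fun p hp => (hcp p hp).1
  have hlocIdeal : ∀ p ∈ M, IsIdealSet (locSet f S p) := fun p hp => (hcp p hp).2
  have hnotS : ∀ p ∈ M, ∀ s ∈ S, s ∉ p := fun p hp s hs hsp =>
    (Set.eq_empty_iff_forall_notMem.1 hp.2 s) ⟨hsp, hs⟩
  have hassp : ∀ p ∈ M, lAss S ⊆ p := by
    intro p hp r hr
    obtain ⟨s, hs, h0⟩ := hr
    have : s * r ∈ p := h0 ▸ (hcpP p hp).1.zero_mem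
    rcases (hcpP p hp).2.2 s r this with h | h
    · exact absurd h (hnotS p hp s hs)
    · exact h
  have hinter : ∀ b : R, (∀ p ∈ M, b ∈ p) → b ∈ lAss S := fun b hb =>
    interMin_lAss hR hfin hMul hregL b (fun p h1 h2 => hb p ⟨h1, h2⟩)
  have hzero : ∀ q : Q, (∀ p ∈ M, q ∈ locSet f S p) → q = 0 := by
    intro q hq
    obtain ⟨t, ht, b, htq, hbp⟩ := common_denom f hf horeL hMul hMfin q
      hassp (fun p hp => (hcpP p hp).1) hq
    have hb0 : f b = 0 := (hf.ker b).2 (hinter b hbp)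
    exact (hf.isUnit t ht).mul_left_cancel (show f t * q = f t * 0 by rw [htq, hb0, mul_zero])
  have hMne : M.Nonempty := by
    by_contra hne
    rw [Set.not_nonempty_iff_eq_empty] at hne
    obtain ⟨s, hs, h0⟩ := hinter 1 (fun p hp => by rw [hne] at hp; exact absurd hp (Set.notMem_empty p))
    rw [mul_one] at h0
    exact hMul.2.1 (h0 ▸ hs)
  have hpre : ∀ p ∈ M, ∀ r : R, f r ∈ locSet f S p ↔ r ∈ p := by
    intro p hp r
    constructor
    · rintro ⟨s, hs, a, ha, hsr⟩
      rw [← map_mul] at hsr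
      have hd : s * r - a ∈ lAss S := (hf.ker _).1 (by rw [map_sub, hsr, sub_self])
      have hsrp : s * r ∈ p := by
        have := (hcpP p hp).1.add_mem (hassp p hp hd) ha
        simpa using this
      rcases (hcpP p hp).2.2 s r hsrp with h | h
      · exact absurd h (hnotS p hp s hs)
      · exact h
    · intro hr
      exact ⟨1, hMul.1, r, hr, by rw [map_one, one_mul]⟩
  have hLcp : ∀ p ∈ M, IsCompletelyPrimeIdealSet (locSet f S p) := fun p hp =>
    locSet_completelyPrime f hf horeL (hcpP p hp) hp.2 (hassp p hp) (hlocIdeal p hp)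
  have hLprime : ∀ p ∈ M, IsPrimeIdealSet (locSet f S p) := fun p hp => (hLcp p hp).isPrime
  -- the list of localized minimal primes
  set l : List (Set Q) := hMfin.toFinset.toList.map (locSet f S) with hldef
  have hlmem : ∀ B ∈ l, ∃ p ∈ M, locSet f S p = B := by
    intro B hB
    rw [hldef] at hB
    obtain ⟨p, hp, rfl⟩ := List.mem_map.1 hB
    rw [Finset.mem_toList, Set.Finite.mem_toFinset] at hp
    exact ⟨p, hp, rfl⟩
  have hlmem' : ∀ p ∈ M, locSet f S p ∈ l := by
    intro p hp
    rw [hldef]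
    exact List.mem_map.2 ⟨p, by rw [Finset.mem_toList, Set.Finite.mem_toFinset]; exact hp, rfl⟩
  have hlne : l ≠ [] := by
    obtain ⟨p, hp⟩ := hMne
    intro h
    rw [h] at hlmem'
    exact absurd (hlmem' p hp) List.not_mem_nil
  have hlid : ∀ B ∈ l, IsIdealSet B := by
    intro B hB
    obtain ⟨p, hp, rfl⟩ := hlmem B hB
    exact hlocIdeal p hp
  have hprod0 : ∀ x ∈ prodSet l, x = (0:Q) := fun x hx =>
    hzero x (fun p hp => prodSet_mem_of_mem l hlid x hx _ (hlmem' p hp))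
  have hkey : ∀ P : Set Q, IsPrimeIdealSet P → ∃ p ∈ M, locSet f S p ⊆ P := by
    intro P hP
    obtain ⟨B, hBl, hBP⟩ := prime_of_prodSet_subset hP l hlne hlid
      (fun x hx => by rw [hprod0 x hx]; exact hP.1.zero_mem)
    obtain ⟨p, hp, rfl⟩ := hlmem B hBl
    exact ⟨p, hp, hBP⟩
  have hLmin : ∀ p ∈ M, IsMinimalPrimeIdealSet (locSet f S p) := by
    intro p hp
    refine ⟨hLprime p hp, fun P' hP' hsub => ?_⟩
    obtain ⟨p'', hp'', hsub''⟩ := hkey P' hP'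
    have hppsub : p'' ⊆ p := by
      intro a ha
      exact (hpre p hp a).1 (hsub (hsub'' ((hpre p'' hp'' a).2 ha)))
    have heq : p'' = p := hp.1.2 p'' hp''.1.1 hppsub
    exact le_antisymm hsub (heq ▸ hsub'')
  have himg : minPrimes Q = locSet f S '' M := by
    ext P
    constructor
    · intro hP
      obtain ⟨p, hp, hsub⟩ := hkey P hP.1
      exact ⟨p, hp, hP.2 _ (hLprime p hp) hsub⟩
    · rintro ⟨p, hp, rfl⟩
      exact hLmin p hp
  have hinj : Set.InjOn (locSet f S) M := by
    intro p hp p' hp' heq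
    ext a
    rw [← hpre p hp a, ← hpre p' hp' a, heq]
  refine ⟨?_, himg, ?_, hinj, ?_⟩
  · ext q
    simp only [primeRadicalSet, Set.mem_setOf_eq, Set.mem_singleton_iff]
    constructor
    · intro hq
      exact hzero q (fun p hp => hq _ (hLprime p hp))
    · rintro rfl
      exact fun P hP => hP.1.zero_mem
  · intro P hP
    rw [himg] at hP
    obtain ⟨p, hp, rfl⟩ := hP
    exact hLcp p hp
  · rw [himg, Set.ncard_image_of_injOn hinj]


end BavulaMinPrimes
end
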